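/- arXiv:1211.3552 — 4 statements merged into one kernel-verified Lean document; each statement's English description precedes it below -/
import Mathlib

section
/- In Cl(g) with γ = -(1/6) Σ_{a,b,c} f_{abc} x_a x_b x_c, the commutator [x_a, γ] equals g_a = -(1/2) Σ_{r,s} f_{ars} x_r x_s. -/
/-- in the Clifford algebra (generators `x a` with
`x_a x_b + x_b x_a = δ_{ab}`), with totally antisymmetric structure constants
`f` satisfying the Jacobi identity and
`γ = -(1/6) ∑ f_{abc} x_a x_b x_c`, the super-commutator `[x_a, γ]`
(an anticommutator, both elements being odd) equals
`g_a = -(1/2) ∑ f_{ars} x_r x_s`. -/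
theorem stmt14 {K : Type*} [Field K] [CharZero K]
    {A : Type*} [Ring A] [Algebra K A] {n : ℕ}
    (x : Fin n → A) (f : Fin n → Fin n → Fin n → K)
    (hx : ∀ a b, x a * x b + x b * x a = if a = b then 1 else 0)
    (hf1 : ∀ a b c, f a b c = - f b a c)
    (hf2 : ∀ a b c, f a b c = - f a c b)
    (hjac : ∀ a b c d, ∑ e, (f a b e * f e c d + f c b e * f a e d
        + f d b e * f a c e) = 0)
    (γ : A)
    (hγ : γ = (-(1/6 : K)) • ∑ a, ∑ b, ∑ c, f a b c • (x a * x b * x c))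
    (g : Fin n → A)
    (hg : ∀ a, g a = (-(1/2 : K)) • ∑ r, ∑ s, f a r s • (x r * x s)) :
    ∀ a, x a * γ + γ * x a = g a := by
  intro a
  have e : ∀ b, x a * x b = (if a = b then (1:A) else 0) - x b * x a := by
    intro b; exact eq_sub_of_add_eq (hx a b)
  have key : ∀ p q r, x a * (x p * x q * x r) + (x p * x q * x r) * x a
      = (if a = p then (1:A) else 0) * (x q * x r)
        - (if a = q then (1:A) else 0) * (x p * x r)
        + (if a = r then (1:A) else 0) * (x p * x q) := by
    intro p q r
    calc x a * (x p * x q * x r) + (x p * x q * x r) * x a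
        = (x a * x p) * x q * x r + (x p * x q * x r) * x a := by noncomm_ring
      _ = ((if a = p then (1:A) else 0) - x p * x a) * x q * x r
            + (x p * x q * x r) * x a := by rw [e p]
      _ = (if a = p then (1:A) else 0) * (x q * x r) - x p * ((x a * x q) * x r)
            + (x p * x q * x r) * x a := by noncomm_ring
      _ = (if a = p then (1:A) else 0) * (x q * x r)
            - x p * (((if a = q then (1:A) else 0) - x q * x a) * x r)
            + (x p * x q * x r) * x a := by rw [e q]
      _ = (if a = p then (1:A) else 0) * (x q * x r)
            - x p * ((if a = q then (1:A) else 0) * x r)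
            + x p * (x q * (x a * x r))
            + (x p * x q * x r) * x a := by noncomm_ring
      _ = (if a = p then (1:A) else 0) * (x q * x r)
            - x p * ((if a = q then (1:A) else 0) * x r)
            + x p * (x q * ((if a = r then (1:A) else 0) - x r * x a))
            + (x p * x q * x r) * x a := by rw [e r]
      _ = _ := by split_ifs <;> noncomm_ring
  have hT : ∀ p q r, f p q r • (x a * (x p * x q * x r) + (x p * x q * x r) * x a)
      = (if a = p then f p q r • (x q * x r) else 0)
        - (if a = q then f p q r • (x p * x r) else 0)
        + (if a = r then f p q r • (x p * x q) else 0) := by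
    intro p q r
    rw [key]
    split_ifs <;> simp [smul_sub, smul_add]
  have pull : ∀ {c : Prop} [Decidable c] (gg : Fin n → A),
      (∑ q, if c then gg q else 0) = if c then ∑ q, gg q else 0 := by
    intro c _ gg; split <;> simp
  rw [hγ, hg a, mul_smul_comm, smul_mul_assoc, ← smul_add]
  have expand : x a * (∑ p, ∑ q, ∑ r, f p q r • (x p * x q * x r))
      + (∑ p, ∑ q, ∑ r, f p q r • (x p * x q * x r)) * x a
      = ∑ p, ∑ q, ∑ r, f p q r • (x a * (x p * x q * x r) + (x p * x q * x r) * x a) := by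
    simp only [Finset.mul_sum, Finset.sum_mul, mul_smul_comm, smul_mul_assoc, smul_add,
      Finset.sum_add_distrib]
  rw [expand]
  have step2 : (∑ p, ∑ q, ∑ r, f p q r • (x a * (x p * x q * x r) + (x p * x q * x r) * x a))
      = (∑ q, ∑ r, f a q r • (x q * x r)) - (∑ p, ∑ r, f p a r • (x p * x r))
        + (∑ p, ∑ q, f p q a • (x p * x q)) := by
    simp only [hT, Finset.sum_add_distrib, Finset.sum_sub_distrib, pull,
      Finset.sum_ite_eq, Finset.mem_univ, if_true]
  rw [step2]
  have hU : (∑ p, ∑ r, f p a r • (x p * x r)) = - ∑ p, ∑ r, f a p r • (x p * x r) := by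
    rw [← Finset.sum_neg_distrib]
    refine Finset.sum_congr rfl fun p _ => ?_
    rw [← Finset.sum_neg_distrib]
    refine Finset.sum_congr rfl fun r _ => ?_
    rw [hf1 p a r, neg_smul]
  have hV : (∑ p, ∑ q, f p q a • (x p * x q)) = ∑ p, ∑ q, f a p q • (x p * x q) := by
    refine Finset.sum_congr rfl fun p _ => Finset.sum_congr rfl fun q _ => ?_
    rw [hf2 p q a, hf1 p a q, neg_neg]
  rw [hU, hV, sub_neg_eq_add]
  have h3 : (∑ q, ∑ r, f a q r • (x q * x r)) + (∑ p, ∑ r, f a p r • (x p * x r))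
      + (∑ p, ∑ q, f a p q • (x p * x q))
      = (3:K) • ∑ r, ∑ s, f a r s • (x r * x s) := by
    rw [show (3:K) = 1 + 1 + 1 by norm_num, add_smul, add_smul, one_smul]
  rw [h3, smul_smul]
  norm_num
end

section
/- In Cl(g), the cubic element γ = -(1/6) Σ f_{abc} x_a x_b x_c squares to a scalar: γ² = -(1/48) Σ_{a,b,c} f_{abc} f_{abc}. -/
set_option linter.unusedSectionVars false

namespace S15

variable {n : ℕ} {M : Type*} [AddCommMonoid M]

lemma pack4 (h : Fin n → Fin n → Fin n → Fin n → M) :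
    ∑ a, ∑ b, ∑ p, ∑ q, h a b p q
      = ∑ z : Fin n × Fin n × Fin n × Fin n, h z.1 z.2.1 z.2.2.1 z.2.2.2 := by
  simp [Fintype.sum_prod_type]

lemma sum4_perm (h : Fin n → Fin n → Fin n → Fin n → M)
    (σ : Equiv.Perm (Fin n × Fin n × Fin n × Fin n)) :
    ∑ a, ∑ b, ∑ p, ∑ q, h a b p q
      = ∑ a, ∑ b, ∑ p, ∑ q,
          h (σ (a,b,p,q)).1 (σ (a,b,p,q)).2.1 (σ (a,b,p,q)).2.2.1 (σ (a,b,p,q)).2.2.2 := by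
  rw [pack4, pack4 (fun a b p q => h (σ (a,b,p,q)).1 (σ (a,b,p,q)).2.1 (σ (a,b,p,q)).2.2.1 (σ (a,b,p,q)).2.2.2)]
  exact (Fintype.sum_equiv σ _ _ (fun z => rfl)).symm

lemma pack5 (h : Fin n → Fin n → Fin n → Fin n → Fin n → M) :
    ∑ a, ∑ b, ∑ p, ∑ q, ∑ r, h a b p q r
      = ∑ z : Fin n × Fin n × Fin n × Fin n × Fin n,
          h z.1 z.2.1 z.2.2.1 z.2.2.2.1 z.2.2.2.2 := by
  simp [Fintype.sum_prod_type]

lemma sum5_perm (h : Fin n → Fin n → Fin n → Fin n → Fin n → M)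
    (σ : Equiv.Perm (Fin n × Fin n × Fin n × Fin n × Fin n)) :
    ∑ a, ∑ b, ∑ p, ∑ q, ∑ r, h a b p q r
      = ∑ a, ∑ b, ∑ p, ∑ q, ∑ r,
          h (σ (a,b,p,q,r)).1 (σ (a,b,p,q,r)).2.1 (σ (a,b,p,q,r)).2.2.1
            (σ (a,b,p,q,r)).2.2.2.1 (σ (a,b,p,q,r)).2.2.2.2 := by
  rw [pack5, pack5 (fun a b p q r => h (σ (a,b,p,q,r)).1 (σ (a,b,p,q,r)).2.1
    (σ (a,b,p,q,r)).2.2.1 (σ (a,b,p,q,r)).2.2.2.1 (σ (a,b,p,q,r)).2.2.2.2)]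
  exact (Fintype.sum_equiv σ _ _ (fun z => rfl)).symm

end S15

namespace S15

variable {K : Type*} [Field K] {A : Type*} [Ring A] [Algebra K A] {n : ℕ}

/-- Kronecker delta with values in `K`. -/
def dd (a b : Fin n) : K := if a = b then 1 else 0

lemma dd_comm (a b : Fin n) : (dd a b : K) = dd b a := by
  simp [dd, eq_comm]

variable (x : Fin n → A)
variable (hx : ∀ a b, x a * x b + x b * x a = if a = b then 1 else 0)

include hx

lemma hd (a b : Fin n) : x a * x b = (dd a b : K) • (1 : A) - x b * x a := by
  have h := hx a b
  have : (if a = b then (1:A) else 0) = (dd a b : K) • (1 : A) := by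
    by_cases hab : a = b <;> simp [dd, hab]
  rw [this] at h
  exact eq_sub_of_add_eq h

-- swap x c * x d in the middle of a product
lemma swap_mid (c d : Fin n) (t u : A) :
    t * x c * x d * u = (dd c d : K) • (t * u) - t * x d * x c * u := by
  have h1 : t * x c * x d = t * (x c * x d) := by rw [mul_assoc]
  rw [h1, hd (K := K) x hx, mul_sub, sub_mul, mul_smul_comm, smul_mul_assoc, mul_one,
    ← mul_assoc, mul_assoc t (x d) (x c), ← mul_assoc]

lemma swap_right (c d : Fin n) (t : A) :
    t * x c * x d = (dd c d : K) • t - t * x d * x c := by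
  have := swap_mid (K := K) x hx c d t 1
  simpa [mul_one] using this

lemma swap_left (c d : Fin n) (u : A) :
    x c * x d * u = (dd c d : K) • u - x d * x c * u := by
  have := swap_mid (K := K) x hx c d 1 u
  simpa [one_mul] using this

end S15

namespace S15

variable {K : Type*} [Field K] {A : Type*} [Ring A] [Algebra K A] {n : ℕ}
variable (x : Fin n → A)
variable (hx : ∀ a b, x a * x b + x b * x a = if a = b then 1 else 0)

include hx

lemma M4 (a b c d : Fin n) : x a * x b * x c * x d
    = (dd c d : K) • (x a * x b) - (dd b d : K) • (x a * x c)
      + (dd a d : K) • (x b * x c) - x d * (x a * x b * x c) := by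
  rw [swap_right (K := K) x hx c d (x a * x b),
      swap_mid (K := K) x hx b d (x a) (x c),
      mul_assoc (x a * x d) (x b) (x c),
      swap_left (K := K) x hx a d (x b * x c)]
  simp only [mul_assoc]
  abel

lemma Q1 (a b p q : Fin n) : x a * x b * x p * x q
    = (dd b p : K) • (x a * x q) - (dd a p : K) • (x b * x q)
      + x p * x a * x b * x q := by
  rw [swap_mid (K := K) x hx b p (x a) (x q),
      mul_assoc (x a * x p) (x b) (x q),
      swap_left (K := K) x hx a p (x b * x q)]
  simp only [mul_assoc]
  abel

lemma Q2 (a b p q : Fin n) : x p * x a * x b * x q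
    = (dd b q : K) • (x p * x a) - (dd a q : K) • (x p * x b)
      + x p * x q * x a * x b := by
  rw [swap_right (K := K) x hx b q (x p * x a),
      swap_mid (K := K) x hx a q (x p) (x b)]
  abel

lemma Q3 (a b p q : Fin n) : x b * x q * x p * x a
    = (dd p q : K) • (x b * x a) - (dd b p : K) • (x q * x a)
      + (dd b q : K) • (x p * x a) - (dd a b : K) • (x p * x q)
      + x p * x q * x a * x b := by
  rw [swap_mid (K := K) x hx q p (x b) (x a),
      mul_assoc (x b * x p) (x q) (x a),
      swap_left (K := K) x hx b p (x q * x a),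
      dd_comm q p]
  rw [← mul_assoc (x p * x b) (x q) (x a), swap_mid (K := K) x hx b q (x p) (x a),
      swap_right (K := K) x hx b a (x p * x q), dd_comm b a]
  abel

lemma Q4 (a b p q : Fin n) : x q * x b * x p * x a
    = (dd b q : K) • (x p * x a) - x b * x q * x p * x a := by
  rw [mul_assoc (x q * x b) (x p) (x a),
      swap_left (K := K) x hx q b (x p * x a), dd_comm q b]
  simp only [mul_assoc]

end S15

namespace S15

variable {K : Type*} [Field K] [CharZero K] {n : ℕ}

def CC (f : Fin n → Fin n → Fin n → K) (a b p q : Fin n) : K := ∑ d, f a b d * f p q d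

def EE (f : Fin n → Fin n → Fin n → K) (a b : Fin n) : K := ∑ p, ∑ d, f a p d * f b p d

def FF (f : Fin n → Fin n → Fin n → K) : K := ∑ a, ∑ b, ∑ c, f a b c * f a b c

variable (f : Fin n → Fin n → Fin n → K)
  (hf1 : ∀ a b c, f a b c = - f b a c)
  (hf2 : ∀ a b c, f a b c = - f a c b)

section
include hf1

lemma f_aa (a c : Fin n) : f a a c = 0 := by
  have h := hf1 a a c
  have h2 : (2:K) * f a a c = 0 := by linear_combination h
  simpa [two_ne_zero] using mul_eq_zero.mp h2

lemma CC_aa (a p q : Fin n) : CC f a a p q = 0 := by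
  simp [CC, f_aa f hf1]

lemma CC_pp (a b p : Fin n) : CC f a b p p = 0 := by
  simp [CC, f_aa f hf1]

lemma E2 (b q : Fin n) : ∑ p, CC f p b p q = EE f b q := by
  simp only [CC, EE]
  refine Finset.sum_congr rfl fun p _ => Finset.sum_congr rfl fun d _ => ?_
  rw [hf1 p b d, hf1 p q d]; ring

lemma E1 (a q : Fin n) : ∑ p, CC f a p p q = -EE f a q := by
  simp only [CC, EE, ← Finset.sum_neg_distrib]
  refine Finset.sum_congr rfl fun p _ => Finset.sum_congr rfl fun d _ => ?_
  rw [hf1 p q d]; ring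

end

lemma E3 (a p : Fin n) : ∑ q, CC f a q p q = EE f a p := rfl

section
include hf1

lemma E4 (b p : Fin n) : ∑ q, CC f q b p q = -EE f b p := by
  simp only [CC, EE, ← Finset.sum_neg_distrib]
  refine Finset.sum_congr rfl fun q _ => Finset.sum_congr rfl fun d _ => ?_
  rw [hf1 q b d]; ring

end

lemma EE_symm (a b : Fin n) : EE f a b = EE f b a := by
  simp only [EE]
  exact Finset.sum_congr rfl fun p _ => Finset.sum_congr rfl fun d _ => mul_comm _ _

lemma EE_trace : ∑ a, EE f a a = FF f := rfl

section
include hf1 hf2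

lemma C_jac (hjac : ∀ a b c d, ∑ e, (f a b e * f e c d + f c b e * f a e d
      + f d b e * f a c e) = 0) (a b p q : Fin n) :
    CC f a b p q = -CC f b p a q + CC f b q a p := by
  have h := hjac a b p q
  rw [Finset.sum_add_distrib, Finset.sum_add_distrib] at h
  have h1 : ∑ e, f a b e * f e p q = CC f a b p q := by
    refine Finset.sum_congr rfl fun e _ => ?_
    rw [hf1 e p q, hf2 p e q]; ring
  have h2 : ∑ e, f p b e * f a e q = CC f b p a q := by
    simp only [CC]
    refine Finset.sum_congr rfl fun e _ => ?_
    rw [hf1 p b e, hf2 a e q]; ring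
  have h3 : ∑ e, f q b e * f a p e = -CC f b q a p := by
    simp only [CC, ← Finset.sum_neg_distrib]
    refine Finset.sum_congr rfl fun e _ => ?_
    rw [hf1 q b e]; ring
  rw [h1, h2, h3] at h
  linear_combination h

end

end S15


namespace S15

variable {K : Type*} [Field K] [CharZero K] {A : Type*} [Ring A] [Algebra K A] {n : ℕ}

def Sel (x : Fin n → A) (f : Fin n → Fin n → Fin n → K) : A :=
  ∑ a, ∑ b, ∑ c, f a b c • (x a * x b * x c)

def Bd (x : Fin n → A) (f : Fin n → Fin n → Fin n → K) (d : Fin n) : A :=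
  ∑ a, ∑ b, f a b d • (x a * x b)

def Xs (x : Fin n → A) (f : Fin n → Fin n → Fin n → K) : A :=
  ∑ a, ∑ b, EE f a b • (x a * x b)

def Qs (x : Fin n → A) (f : Fin n → Fin n → Fin n → K) : A :=
  ∑ p, ∑ q, ∑ a, ∑ b, CC f a b p q • (x p * x q * x a * x b)

def Rs (x : Fin n → A) (f : Fin n → Fin n → Fin n → K) : A :=
  ∑ p, ∑ q, ∑ a, ∑ b, CC f a b p q • (x p * x a * x b * x q)

def Ps (x : Fin n → A) (f : Fin n → Fin n → Fin n → K) : A :=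
  ∑ p, ∑ q, ∑ a, ∑ b, CC f a b p q • (x a * x b * x p * x q)

def M1s (x : Fin n → A) (f : Fin n → Fin n → Fin n → K) : A :=
  ∑ p, ∑ q, ∑ a, ∑ b, CC f a b p q • (x b * x q * x p * x a)

def M2s (x : Fin n → A) (f : Fin n → Fin n → Fin n → K) : A :=
  ∑ p, ∑ q, ∑ a, ∑ b, CC f a b p q • (x q * x b * x p * x a)

variable (x : Fin n → A) (f : Fin n → Fin n → Fin n → K)

lemma hX2 : (∑ a, ∑ b, EE f a b • (x b * x a)) = Xs x f := by
  rw [Xs, Finset.sum_comm]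
  exact Finset.sum_congr rfl fun _ _ => Finset.sum_congr rfl fun _ _ => by rw [EE_symm]

lemma hX3 : (∑ a, ∑ b, EE f b a • (x a * x b)) = Xs x f := by
  rw [Xs]
  exact Finset.sum_congr rfl fun _ _ => Finset.sum_congr rfl fun _ _ => by rw [EE_symm]

lemma hX4 : (∑ a, ∑ b, EE f b a • (x b * x a)) = Xs x f := by
  rw [Xs]; exact Finset.sum_comm

variable (hx : ∀ a b, x a * x b + x b * x a = if a = b then 1 else 0)

include hx

lemma hXF : Xs x f + Xs x f = FF f • (1 : A) := by
  nth_rewrite 2 [← hX2 x f]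
  rw [Xs, ← Finset.sum_add_distrib]
  have : ∀ a : Fin n, (∑ b, EE f a b • (x a * x b)) + (∑ b, EE f a b • (x b * x a))
      = if True then EE f a a • (1:A) else 0 := by
    intro a
    rw [← Finset.sum_add_distrib, if_pos trivial]
    have : ∀ b : Fin n, EE f a b • (x a * x b) + EE f a b • (x b * x a)
        = if a = b then EE f a b • (1:A) else 0 := by
      intro b
      rw [← smul_add, hx a b]
      by_cases hab : a = b <;> simp [hab]
    rw [Finset.sum_congr rfl fun b _ => this b]
    simp
  rw [Finset.sum_congr rfl fun a _ => this a]
  simp only [if_pos trivial]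
  rw [← Finset.sum_smul, EE_trace]

end S15

namespace S15

variable {K : Type*} [Field K] [CharZero K] {A : Type*} [Ring A] [Algebra K A] {n : ℕ}
variable (x : Fin n → A) (f : Fin n → Fin n → Fin n → K)
variable (hx : ∀ a b, x a * x b + x b * x a = if a = b then 1 else 0)
  (hf1 : ∀ a b c, f a b c = - f b a c)
  (hf2 : ∀ a b c, f a b c = - f a c b)

include hx hf1 hf2

lemma L1 (d : Fin n) : Sel x f * x d = (3:K) • Bd x f d - x d * Sel x f := by
  have hexp : Sel x f * x d = ∑ a, ∑ b, ∑ c,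
      ((f a b c * dd c d) • (x a * x b) - (f a b c * dd b d) • (x a * x c)
        + (f a b c * dd a d) • (x b * x c) - f a b c • (x d * (x a * x b * x c))) := by
    rw [Sel]
    simp only [Finset.sum_mul, smul_mul_assoc]
    refine Finset.sum_congr rfl fun a _ => Finset.sum_congr rfl fun b _ =>
      Finset.sum_congr rfl fun c _ => ?_
    rw [M4 (K := K) x hx a b c d]
    simp only [smul_sub, smul_add, smul_smul]
  rw [hexp]
  simp only [Finset.sum_sub_distrib, Finset.sum_add_distrib]
  have h1 : (∑ a, ∑ b, ∑ c, (f a b c * dd c d) • (x a * x b)) = Bd x f d := by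
    rw [Bd]
    refine Finset.sum_congr rfl fun a _ => Finset.sum_congr rfl fun b _ => ?_
    simp [dd, mul_ite, mul_one, mul_zero, ite_smul, zero_smul]
  have h2 : (∑ a, ∑ b, ∑ c, (f a b c * dd b d) • (x a * x c)) = -Bd x f d := by
    have hc : ∀ a : Fin n, (∑ b, ∑ c, (f a b c * dd b d) • (x a * x c))
        = ∑ c, ∑ b, (f a b c * dd b d) • (x a * x c) := fun a => Finset.sum_comm
    rw [Finset.sum_congr rfl fun a _ => hc a, Bd, ← Finset.sum_neg_distrib]
    refine Finset.sum_congr rfl fun a _ => ?_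
    rw [← Finset.sum_neg_distrib]
    refine Finset.sum_congr rfl fun b _ => ?_
    simp only [dd, mul_ite, mul_one, mul_zero, ite_smul, zero_smul,
      Finset.sum_ite_eq, Finset.sum_ite_eq', Finset.mem_univ, if_true]
    rw [hf2 a d b]
    simp
  have h3 : (∑ a, ∑ b, ∑ c, (f a b c * dd a d) • (x b * x c)) = Bd x f d := by
    rw [Finset.sum_comm]
    have hc : ∀ b : Fin n, (∑ a, ∑ c, (f a b c * dd a d) • (x b * x c))
        = ∑ c, ∑ a, (f a b c * dd a d) • (x b * x c) := fun b => Finset.sum_comm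
    rw [Finset.sum_congr rfl fun b _ => hc b, Bd]
    refine Finset.sum_congr rfl fun b _ => Finset.sum_congr rfl fun c _ => ?_
    simp only [dd, mul_ite, mul_one, mul_zero, ite_smul, zero_smul,
      Finset.sum_ite_eq, Finset.sum_ite_eq', Finset.mem_univ, if_true]
    rw [hf1 d b c, ← hf2 b c d]
  have h4 : (∑ a, ∑ b, ∑ c, f a b c • (x d * (x a * x b * x c))) = x d * Sel x f := by
    rw [Sel, Finset.mul_sum]
    refine Finset.sum_congr rfl fun a _ => ?_
    rw [Finset.mul_sum]
    refine Finset.sum_congr rfl fun b _ => ?_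
    rw [Finset.mul_sum]
    exact Finset.sum_congr rfl fun c _ => (mul_smul_comm _ _ _).symm
  rw [h1, h2, h3, h4]
  have h3K : (3:K) • Bd x f d = Bd x f d + Bd x f d + Bd x f d := by
    rw [show (3:K) = 1 + 1 + 1 by norm_num, add_smul, add_smul, one_smul]
  rw [h3K]
  abel

end S15

namespace S15

variable {K : Type*} [Field K] [CharZero K] {A : Type*} [Ring A] [Algebra K A] {n : ℕ}
variable (x : Fin n → A) (f : Fin n → Fin n → Fin n → K)
variable (hx : ∀ a b, x a * x b + x b * x a = if a = b then 1 else 0)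
  (hf1 : ∀ a b c, f a b c = - f b a c)
  (hf2 : ∀ a b c, f a b c = - f a c b)

include hx hf1 hf2

lemma hSm (p q r : Fin n) : Sel x f * (x p * x q * x r)
    = (3:K) • (Bd x f p * x q * x r) - (3:K) • (x p * Bd x f q * x r)
      + (3:K) • (x p * x q * Bd x f r) - x p * x q * x r * Sel x f := by
  have h0 : Sel x f * (x p * x q * x r) = Sel x f * x p * x q * x r := by
    simp only [← mul_assoc]
  rw [h0, L1 x f hx hf1 hf2 p, sub_mul, sub_mul, mul_assoc (x p) (Sel x f) (x q)]
  rw [L1 x f hx hf1 hf2 q, mul_sub, sub_mul]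
  have h1 : x p * (x q * Sel x f) * x r = x p * x q * (Sel x f * x r) := by
    simp only [mul_assoc]
  rw [h1, L1 x f hx hf1 hf2 r, mul_sub]
  simp only [smul_mul_assoc, mul_smul_comm, ← mul_assoc]
  abel

end S15

namespace S15

section commhelpers
variable {n : ℕ} {M : Type*} [AddCommMonoid M]

lemma comm3_1 (g : Fin n → Fin n → Fin n → M) :
    ∑ a, ∑ b, ∑ c, g a b c = ∑ b, ∑ c, ∑ a, g a b c := by
  rw [Finset.sum_comm]
  exact Finset.sum_congr rfl fun b _ => Finset.sum_comm

lemma comm3_2 (g : Fin n → Fin n → Fin n → M) :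
    ∑ a, ∑ b, ∑ c, g a b c = ∑ a, ∑ c, ∑ b, g a b c :=
  Finset.sum_congr rfl fun a _ => Finset.sum_comm

lemma comm4_1 (g : Fin n → Fin n → Fin n → Fin n → M) :
    ∑ a, ∑ b, ∑ c, ∑ d, g a b c d = ∑ b, ∑ c, ∑ d, ∑ a, g a b c d := by
  rw [Finset.sum_comm]
  exact Finset.sum_congr rfl fun b _ => comm3_1 _

lemma comm4_23 (g : Fin n → Fin n → Fin n → Fin n → M) :
    ∑ a, ∑ b, ∑ c, ∑ d, g a b c d = ∑ a, ∑ c, ∑ b, ∑ d, g a b c d :=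
  Finset.sum_congr rfl fun a _ => Finset.sum_comm

-- move 2nd-level sum to innermost (for 4 nested sums)
lemma comm4_2 (g : Fin n → Fin n → Fin n → Fin n → M) :
    ∑ a, ∑ b, ∑ c, ∑ d, g a b c d = ∑ a, ∑ c, ∑ d, ∑ b, g a b c d :=
  Finset.sum_congr rfl fun a _ => comm3_1 _

lemma comm5_3 (g : Fin n → Fin n → Fin n → Fin n → Fin n → M) :
    ∑ a, ∑ b, ∑ c, ∑ d, ∑ e, g a b c d e = ∑ a, ∑ b, ∑ d, ∑ e, ∑ c, g a b c d e :=
  Finset.sum_congr rfl fun a _ => Finset.sum_congr rfl fun b _ => comm3_1 _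

lemma comm5_2 (g : Fin n → Fin n → Fin n → Fin n → Fin n → M) :
    ∑ a, ∑ b, ∑ c, ∑ d, ∑ e, g a b c d e = ∑ a, ∑ c, ∑ d, ∑ e, ∑ b, g a b c d e :=
  Finset.sum_congr rfl fun a _ => comm4_1 _

lemma comm5_1 (g : Fin n → Fin n → Fin n → Fin n → Fin n → M) :
    ∑ a, ∑ b, ∑ c, ∑ d, ∑ e, g a b c d e = ∑ b, ∑ c, ∑ d, ∑ e, ∑ a, g a b c d e := by
  rw [Finset.sum_comm]
  exact Finset.sum_congr rfl fun b _ => comm4_1 _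

end commhelpers

variable {K : Type*} [Field K] [CharZero K] {A : Type*} [Ring A] [Algebra K A] {n : ℕ}
variable (x : Fin n → A) (f : Fin n → Fin n → Fin n → K)
variable (hx : ∀ a b, x a * x b + x b * x a = if a = b then 1 else 0)
  (hf1 : ∀ a b c, f a b c = - f b a c)
  (hf2 : ∀ a b c, f a b c = - f a c b)

section CClem
include hf1 hf2

lemma CCr (p q a b : Fin n) : (∑ r, f p q r * f a b r) = CC f a b p q := by
  simp only [CC]
  exact Finset.sum_congr rfl fun d _ => mul_comm _ _

lemma CCq (p r a b : Fin n) : (∑ q, f p q r * f a b q) = -CC f a b p r := by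
  simp only [CC, ← Finset.sum_neg_distrib]
  refine Finset.sum_congr rfl fun q _ => ?_
  rw [hf2 p q r]; ring

lemma CCp (q r a b : Fin n) : (∑ p, f p q r * f a b p) = CC f a b q r := by
  simp only [CC]
  refine Finset.sum_congr rfl fun p _ => ?_
  rw [hf1 p q r, hf2 q p r]; ring

end CClem

section TT
include hf1 hf2

lemma TT1eq : (∑ p, ∑ q, ∑ r, f p q r • (x p * x q * Bd x f r)) = Qs x f := by
  have hexp : (∑ p, ∑ q, ∑ r, f p q r • (x p * x q * Bd x f r))
      = ∑ p, ∑ q, ∑ r, ∑ a, ∑ b, (f p q r * f a b r) • (x p * x q * x a * x b) := by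
    refine Finset.sum_congr rfl fun p _ => Finset.sum_congr rfl fun q _ =>
      Finset.sum_congr rfl fun r _ => ?_
    rw [Bd]
    simp only [Finset.mul_sum, Finset.smul_sum, mul_smul_comm, smul_smul, ← mul_assoc]
  rw [hexp, comm5_3, Qs]
  refine Finset.sum_congr rfl fun p _ => Finset.sum_congr rfl fun q _ =>
    Finset.sum_congr rfl fun a _ => Finset.sum_congr rfl fun b _ => ?_
  rw [← Finset.sum_smul, CCr f hf1 hf2]

lemma TT2eq : (∑ p, ∑ q, ∑ r, f p q r • (x p * Bd x f q * x r)) = -Rs x f := by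
  have hexp : (∑ p, ∑ q, ∑ r, f p q r • (x p * Bd x f q * x r))
      = ∑ p, ∑ q, ∑ r, ∑ a, ∑ b, (f p q r * f a b q) • (x p * x a * x b * x r) := by
    refine Finset.sum_congr rfl fun p _ => Finset.sum_congr rfl fun q _ =>
      Finset.sum_congr rfl fun r _ => ?_
    rw [Bd]
    simp only [Finset.mul_sum, Finset.sum_mul, Finset.smul_sum, mul_smul_comm,
      smul_mul_assoc, smul_smul, ← mul_assoc]
  rw [hexp, comm5_2, Rs, ← Finset.sum_neg_distrib]
  refine Finset.sum_congr rfl fun p _ => ?_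
  rw [← Finset.sum_neg_distrib]
  refine Finset.sum_congr rfl fun q _ => ?_
  rw [← Finset.sum_neg_distrib]
  refine Finset.sum_congr rfl fun a _ => ?_
  rw [← Finset.sum_neg_distrib]
  refine Finset.sum_congr rfl fun b _ => ?_
  rw [← Finset.sum_smul, CCq f hf1 hf2]
  simp

lemma TT3eq : (∑ p, ∑ q, ∑ r, f p q r • (Bd x f p * x q * x r)) = Ps x f := by
  have hexp : (∑ p, ∑ q, ∑ r, f p q r • (Bd x f p * x q * x r))
      = ∑ p, ∑ q, ∑ r, ∑ a, ∑ b, (f p q r * f a b p) • (x a * x b * x q * x r) := by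
    refine Finset.sum_congr rfl fun p _ => Finset.sum_congr rfl fun q _ =>
      Finset.sum_congr rfl fun r _ => ?_
    rw [Bd]
    simp only [Finset.sum_mul, Finset.smul_sum, smul_mul_assoc, smul_smul, ← mul_assoc]
  rw [hexp, comm5_1, Ps]
  refine Finset.sum_congr rfl fun q _ => Finset.sum_congr rfl fun r _ =>
    Finset.sum_congr rfl fun a _ => Finset.sum_congr rfl fun b _ => ?_
  rw [← Finset.sum_smul, CCp f hf1 hf2]

end TT

end S15

namespace S15

variable {K : Type*} [Field K] [CharZero K] {A : Type*} [Ring A] [Algebra K A] {n : ℕ}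
variable (x : Fin n → A) (f : Fin n → Fin n → Fin n → K)
variable (hx : ∀ a b, x a * x b + x b * x a = if a = b then 1 else 0)
  (hf1 : ∀ a b c, f a b c = - f b a c)
  (hf2 : ∀ a b c, f a b c = - f a c b)

include hx hf1 hf2

lemma key : Sel x f * Sel x f + Sel x f * Sel x f
    = (3:K) • (Ps x f + Rs x f + Qs x f) := by
  have e1 : Sel x f * Sel x f
      = ∑ p, ∑ q, ∑ r, f p q r • (Sel x f * (x p * x q * x r)) := by
    nth_rewrite 2 [Sel]
    simp only [Finset.mul_sum, mul_smul_comm]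
  have e5 : ∀ p q r : Fin n, f p q r • (Sel x f * (x p * x q * x r))
      = (3:K) • (f p q r • (Bd x f p * x q * x r))
        - (3:K) • (f p q r • (x p * Bd x f q * x r))
        + (3:K) • (f p q r • (x p * x q * Bd x f r))
        - f p q r • (x p * x q * x r * Sel x f) := by
    intro p q r
    rw [hSm x f hx hf1 hf2 p q r]
    simp only [smul_sub, smul_add]
    rw [smul_comm (f p q r) (3:K), smul_comm (f p q r) (3:K), smul_comm (f p q r) (3:K)]
  have e6 : Sel x f * Sel x f
      = (3:K) • (∑ p, ∑ q, ∑ r, f p q r • (Bd x f p * x q * x r))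
        - (3:K) • (∑ p, ∑ q, ∑ r, f p q r • (x p * Bd x f q * x r))
        + (3:K) • (∑ p, ∑ q, ∑ r, f p q r • (x p * x q * Bd x f r))
        - ∑ p, ∑ q, ∑ r, f p q r • (x p * x q * x r * Sel x f) := by
    rw [e1, Finset.sum_congr rfl fun p _ => Finset.sum_congr rfl fun q _ =>
      Finset.sum_congr rfl fun r _ => e5 p q r]
    simp only [Finset.sum_sub_distrib, Finset.sum_add_distrib, Finset.smul_sum]
  have h4 : (∑ p, ∑ q, ∑ r, f p q r • (x p * x q * x r * Sel x f))
      = Sel x f * Sel x f := by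
    conv_rhs => rw [Sel]
    rw [Finset.sum_mul]
    refine Finset.sum_congr rfl fun p _ => ?_
    rw [Finset.sum_mul]
    refine Finset.sum_congr rfl fun q _ => ?_
    rw [Finset.sum_mul]
    exact Finset.sum_congr rfl fun r _ => (smul_mul_assoc _ _ _).symm
  rw [h4, TT1eq x f hf1 hf2, TT2eq x f hf1 hf2, TT3eq x f hf1 hf2] at e6
  rw [eq_sub_iff_add_eq] at e6
  rw [e6]
  simp only [smul_neg, neg_neg, smul_add]
  abel

end S15

namespace S15

variable {K : Type*} [Field K] [CharZero K] {A : Type*} [Ring A] [Algebra K A] {n : ℕ}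
variable (x : Fin n → A) (f : Fin n → Fin n → Fin n → K)
variable (hx : ∀ a b, x a * x b + x b * x a = if a = b then 1 else 0)
  (hf1 : ∀ a b c, f a b c = - f b a c)
  (hf2 : ∀ a b c, f a b c = - f a c b)

include hx hf1 hf2

lemma hP : Ps x f = Rs x f - (Xs x f + Xs x f) := by
  have e0 : Ps x f = ∑ p, ∑ q, ∑ a, ∑ b,
      ((CC f a b p q * dd b p) • (x a * x q) - (CC f a b p q * dd a p) • (x b * x q)
        + CC f a b p q • (x p * x a * x b * x q)) := by
    rw [Ps]
    refine Finset.sum_congr rfl fun p _ => Finset.sum_congr rfl fun q _ =>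
      Finset.sum_congr rfl fun a _ => Finset.sum_congr rfl fun b _ => ?_
    rw [Q1 (K := K) x hx a b p q]
    simp only [smul_sub, smul_add, smul_smul]
  rw [e0]
  simp only [Finset.sum_sub_distrib, Finset.sum_add_distrib]
  have hD1 : (∑ p, ∑ q, ∑ a, ∑ b, (CC f a b p q * dd b p) • (x a * x q)) = -Xs x f := by
    rw [comm4_1, ← hX4 x f]
    simp only [dd, mul_ite, mul_one, mul_zero, ite_smul, zero_smul,
      Finset.sum_ite_eq, Finset.sum_ite_eq', Finset.mem_univ, if_true]
    rw [← Finset.sum_neg_distrib]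
    refine Finset.sum_congr rfl fun q _ => ?_
    rw [← Finset.sum_neg_distrib]
    refine Finset.sum_congr rfl fun a _ => ?_
    rw [← Finset.sum_smul, E1 f hf1, neg_smul]
  have hD2 : (∑ p, ∑ q, ∑ a, ∑ b, (CC f a b p q * dd a p) • (x b * x q)) = Xs x f := by
    rw [comm4_1, comm4_23, ← hX4 x f]
    simp only [dd, mul_ite, mul_one, mul_zero, ite_smul, zero_smul,
      Finset.sum_ite_eq, Finset.sum_ite_eq', Finset.mem_univ, if_true]
    refine Finset.sum_congr rfl fun q _ => Finset.sum_congr rfl fun b _ => ?_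
    rw [← Finset.sum_smul, E2 f hf1]
  rw [hD1, hD2, ← Rs]
  abel

lemma hR : Rs x f = Qs x f + (Xs x f + Xs x f) := by
  have e0 : Rs x f = ∑ p, ∑ q, ∑ a, ∑ b,
      ((CC f a b p q * dd b q) • (x p * x a) - (CC f a b p q * dd a q) • (x p * x b)
        + CC f a b p q • (x p * x q * x a * x b)) := by
    rw [Rs]
    refine Finset.sum_congr rfl fun p _ => Finset.sum_congr rfl fun q _ =>
      Finset.sum_congr rfl fun a _ => Finset.sum_congr rfl fun b _ => ?_
    rw [Q2 (K := K) x hx a b p q]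
    simp only [smul_sub, smul_add, smul_smul]
  rw [e0]
  simp only [Finset.sum_sub_distrib, Finset.sum_add_distrib]
  have hD3 : (∑ p, ∑ q, ∑ a, ∑ b, (CC f a b p q * dd b q) • (x p * x a)) = Xs x f := by
    rw [comm4_2, ← hX3 x f]
    simp only [dd, mul_ite, mul_one, mul_zero, ite_smul, zero_smul,
      Finset.sum_ite_eq, Finset.sum_ite_eq', Finset.mem_univ, if_true]
    refine Finset.sum_congr rfl fun p _ => Finset.sum_congr rfl fun a _ => ?_
    rw [← Finset.sum_smul, E3 f]
  have hD4 : (∑ p, ∑ q, ∑ a, ∑ b, (CC f a b p q * dd a q) • (x p * x b)) = -Xs x f := by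
    rw [comm4_2, comm4_23, ← hX3 x f]
    simp only [dd, mul_ite, mul_one, mul_zero, ite_smul, zero_smul,
      Finset.sum_ite_eq, Finset.sum_ite_eq', Finset.mem_univ, if_true]
    rw [← Finset.sum_neg_distrib]
    refine Finset.sum_congr rfl fun p _ => ?_
    rw [← Finset.sum_neg_distrib]
    refine Finset.sum_congr rfl fun b _ => ?_
    rw [← Finset.sum_smul, E4 f hf1, neg_smul]
  rw [hD3, hD4, ← Qs]
  abel

end S15

namespace S15

variable {K : Type*} [Field K] [CharZero K] {A : Type*} [Ring A] [Algebra K A] {n : ℕ}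
variable (x : Fin n → A) (f : Fin n → Fin n → Fin n → K)
variable (hx : ∀ a b, x a * x b + x b * x a = if a = b then 1 else 0)
  (hf1 : ∀ a b c, f a b c = - f b a c)
  (hf2 : ∀ a b c, f a b c = - f a c b)

include hx hf1 hf2

lemma hM1 : M1s x f = Qs x f + (Xs x f + Xs x f) := by
  have e0 : M1s x f = ∑ p, ∑ q, ∑ a, ∑ b,
      ((CC f a b p q * dd p q) • (x b * x a) - (CC f a b p q * dd b p) • (x q * x a)
        + (CC f a b p q * dd b q) • (x p * x a) - (CC f a b p q * dd a b) • (x p * x q)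
        + CC f a b p q • (x p * x q * x a * x b)) := by
    rw [M1s]
    refine Finset.sum_congr rfl fun p _ => Finset.sum_congr rfl fun q _ =>
      Finset.sum_congr rfl fun a _ => Finset.sum_congr rfl fun b _ => ?_
    rw [Q3 (K := K) x hx a b p q]
    simp only [smul_sub, smul_add, smul_smul]
  rw [e0]
  simp only [Finset.sum_sub_distrib, Finset.sum_add_distrib]
  have hN1 : (∑ p, ∑ q, ∑ a, ∑ b, (CC f a b p q * dd p q) • (x b * x a)) = 0 := by
    rw [comm4_2]
    simp only [dd, mul_ite, mul_one, mul_zero, ite_smul, zero_smul,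
      Finset.sum_ite_eq, Finset.sum_ite_eq', Finset.mem_univ, if_true,
      CC_pp f hf1, Finset.sum_const_zero]
  have hN2 : (∑ p, ∑ q, ∑ a, ∑ b, (CC f a b p q * dd b p) • (x q * x a)) = -Xs x f := by
    rw [comm4_1, ← hX3 x f]
    simp only [dd, mul_ite, mul_one, mul_zero, ite_smul, zero_smul,
      Finset.sum_ite_eq, Finset.sum_ite_eq', Finset.mem_univ, if_true]
    rw [← Finset.sum_neg_distrib]
    refine Finset.sum_congr rfl fun q _ => ?_
    rw [← Finset.sum_neg_distrib]
    refine Finset.sum_congr rfl fun a _ => ?_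
    rw [← Finset.sum_smul, E1 f hf1, neg_smul]
  have hN3 : (∑ p, ∑ q, ∑ a, ∑ b, (CC f a b p q * dd b q) • (x p * x a)) = Xs x f := by
    rw [comm4_2, ← hX3 x f]
    simp only [dd, mul_ite, mul_one, mul_zero, ite_smul, zero_smul,
      Finset.sum_ite_eq, Finset.sum_ite_eq', Finset.mem_univ, if_true]
    refine Finset.sum_congr rfl fun p _ => Finset.sum_congr rfl fun a _ => ?_
    rw [← Finset.sum_smul, E3 f]
  have hN4 : (∑ p, ∑ q, ∑ a, ∑ b, (CC f a b p q * dd a b) • (x p * x q)) = 0 := by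
    simp only [dd, mul_ite, mul_one, mul_zero, ite_smul, zero_smul,
      Finset.sum_ite_eq, Finset.sum_ite_eq', Finset.mem_univ, if_true,
      CC_aa f hf1, Finset.sum_const_zero]
  rw [hN1, hN2, hN3, hN4, ← Qs]
  abel

lemma hM2 : M2s x f = Xs x f - M1s x f := by
  have e0 : M2s x f = ∑ p, ∑ q, ∑ a, ∑ b,
      ((CC f a b p q * dd b q) • (x p * x a)
        - CC f a b p q • (x b * x q * x p * x a)) := by
    rw [M2s]
    refine Finset.sum_congr rfl fun p _ => Finset.sum_congr rfl fun q _ =>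
      Finset.sum_congr rfl fun a _ => Finset.sum_congr rfl fun b _ => ?_
    rw [Q4 (K := K) x hx a b p q]
    simp only [smul_sub, smul_smul]
  rw [e0]
  simp only [Finset.sum_sub_distrib]
  have hN3 : (∑ p, ∑ q, ∑ a, ∑ b, (CC f a b p q * dd b q) • (x p * x a)) = Xs x f := by
    rw [comm4_2, ← hX3 x f]
    simp only [dd, mul_ite, mul_one, mul_zero, ite_smul, zero_smul,
      Finset.sum_ite_eq, Finset.sum_ite_eq', Finset.mem_univ, if_true]
    refine Finset.sum_congr rfl fun p _ => Finset.sum_congr rfl fun a _ => ?_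
    rw [← Finset.sum_smul, E3 f]
  rw [hN3, ← M1s]

end S15

namespace S15

variable {K : Type*} [Field K] [CharZero K] {A : Type*} [Ring A] [Algebra K A] {n : ℕ}
variable (x : Fin n → A) (f : Fin n → Fin n → Fin n → K)
variable (hx : ∀ a b, x a * x b + x b * x a = if a = b then 1 else 0)
  (hf1 : ∀ a b c, f a b c = - f b a c)
  (hf2 : ∀ a b c, f a b c = - f a c b)

include hx hf1 hf2

lemma hQ (hjac : ∀ a b c d, ∑ e, (f a b e * f e c d + f c b e * f a e d
      + f d b e * f a c e) = 0) :
    Qs x f = -M1s x f + M2s x f := by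
  have e0 : Qs x f = ∑ p, ∑ q, ∑ a, ∑ b,
      ((-CC f b p a q + CC f b q a p) • (x p * x q * x a * x b)) := by
    rw [Qs]
    refine Finset.sum_congr rfl fun p _ => Finset.sum_congr rfl fun q _ =>
      Finset.sum_congr rfl fun a _ => Finset.sum_congr rfl fun b _ => ?_
    rw [C_jac f hf1 hf2 hjac a b p q]
  rw [e0]
  simp only [add_smul, neg_smul, Finset.sum_add_distrib, Finset.sum_neg_distrib]
  have c1 : (∑ p, ∑ q, ∑ a, ∑ b, CC f b p a q • (x p * x q * x a * x b)) = M1s x f :=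
    (sum4_perm (fun w1 w2 w3 w4 => CC f w3 w4 w1 w2 • (x w4 * x w2 * x w1 * x w3))
      ⟨fun w => (w.2.2.1, w.2.1, w.2.2.2, w.1), fun w => (w.2.2.2, w.2.1, w.1, w.2.2.1),
        fun w => rfl, fun w => rfl⟩).symm
  have c2 : (∑ p, ∑ q, ∑ a, ∑ b, CC f b q a p • (x p * x q * x a * x b)) = M2s x f :=
    (sum4_perm (fun w1 w2 w3 w4 => CC f w3 w4 w1 w2 • (x w2 * x w4 * x w1 * x w3))
      ⟨fun w => (w.2.2.1, w.1, w.2.2.2, w.2.1), fun w => (w.2.1, w.2.2.2, w.1, w.2.2.1),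
        fun w => rfl, fun w => rfl⟩).symm
  rw [c1, c2]

end S15

/-- in the Clifford algebra, the cubic element
`γ = -(1/6) ∑ f_{abc} x_a x_b x_c` squares to the scalar
`-(1/48) ∑ f_{abc} f_{abc}`. -/
theorem stmt15 {K : Type*} [Field K] [CharZero K]
    {A : Type*} [Ring A] [Algebra K A] {n : ℕ}
    (x : Fin n → A) (f : Fin n → Fin n → Fin n → K)
    (hx : ∀ a b, x a * x b + x b * x a = if a = b then 1 else 0)
    (hf1 : ∀ a b c, f a b c = - f b a c)
    (hf2 : ∀ a b c, f a b c = - f a c b)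
    (hjac : ∀ a b c d, ∑ e, (f a b e * f e c d + f c b e * f a e d
        + f d b e * f a c e) = 0)
    (γ : A)
    (hγ : γ = (-(1/6 : K)) • ∑ a, ∑ b, ∑ c, f a b c • (x a * x b * x c)) :
    γ * γ = ((-(1/48 : K)) * ∑ a, ∑ b, ∑ c, f a b c * f a b c) • (1 : A) := by
  have hS : γ = (-(1/6 : K)) • S15.Sel x f := hγ
  have hkey := S15.key x f hx hf1 hf2
  have hPe := S15.hP x f hx hf1 hf2
  have hRe := S15.hR x f hx hf1 hf2
  have hM1e := S15.hM1 x f hx hf1 hf2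
  have hM2e := S15.hM2 x f hx hf1 hf2
  have hQe := S15.hQ x f hx hf1 hf2 hjac
  have hXFe := S15.hXF x f hx
  rw [hM2e, hM1e] at hQe
  -- hQe : Qs = -(Qs + (Xs+Xs)) + (Xs - (Qs + (Xs+Xs)))
  have h1 : S15.Qs x f + (S15.Qs x f + (S15.Xs x f + S15.Xs x f))
      + (S15.Qs x f + (S15.Xs x f + S15.Xs x f)) = S15.Xs x f := by
    nth_rewrite 1 [hQe]
    abel
  have h3 : S15.Ps x f + S15.Rs x f + S15.Qs x f
      = (S15.Qs x f + (S15.Qs x f + (S15.Xs x f + S15.Xs x f))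
          + (S15.Qs x f + (S15.Xs x f + S15.Xs x f))) - (S15.Xs x f + S15.Xs x f) := by
    rw [hPe, hRe]
    abel
  rw [h1] at h3
  have hsum : S15.Ps x f + S15.Rs x f + S15.Qs x f = -S15.Xs x f := by
    rw [h3]; abel
  rw [hsum] at hkey
  have hgg : γ * γ = ((1/36 : K)) • (S15.Sel x f * S15.Sel x f) := by
    rw [hS]
    rw [smul_mul_assoc, mul_smul_comm, smul_smul]
    norm_num
  have h5 : γ * γ = ((1/72 : K)) • (S15.Sel x f * S15.Sel x f + S15.Sel x f * S15.Sel x f) := by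
    rw [hgg, smul_add, ← add_smul]
    norm_num
  rw [hkey, smul_smul] at h5
  have h6 : γ * γ = (-(1/48 : K)) • (S15.Xs x f + S15.Xs x f) := by
    rw [h5, smul_add, ← add_smul, smul_neg, ← neg_smul]
    norm_num
  rw [h6, hXFe, smul_smul]
  rfl
end

section
/- In the quantum Weil algebra W(g) = U(g) ⊗ Cl(g), the cubic Dirac-type element D = Σ_a x_a u_a + γ satisfies D² = (1/2) Σ_a u_a u_a + γ², which lies in the center of W(g); consequently ad(D)² = 0, i.e., the differential d = ad(D) squares to zero. -/
open Finset
set_option linter.unusedSectionVars false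
set_option linter.unusedVariables false
set_option maxHeartbeats 1000000

section stmt16helpers
variable {M : Type*} [AddCommMonoid M] {n : ℕ}

private lemma stmt16_sum3_comm (g : Fin n → Fin n → Fin n → M) :
    ∑ a, ∑ b, ∑ c, g a b c = ∑ b, ∑ c, ∑ a, g a b c := by
  rw [Finset.sum_comm]
  exact Finset.sum_congr rfl fun b _ => Finset.sum_comm

private lemma stmt16_sum3_cyc' (g : Fin n → Fin n → Fin n → M) :
    ∑ a, ∑ b, ∑ c, g a b c = ∑ a, ∑ b, ∑ c, g c a b := by
  rw [stmt16_sum3_comm]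

private lemma stmt16_sum3_cyc (g : Fin n → Fin n → Fin n → M) :
    ∑ a, ∑ b, ∑ c, g a b c = ∑ a, ∑ b, ∑ c, g b c a := by
  rw [stmt16_sum3_cyc' g, stmt16_sum3_cyc']

private lemma stmt16_sum4_rot (g : Fin n → Fin n → Fin n → Fin n → M) :
    ∑ p, ∑ q, ∑ a, ∑ b, g p q a b = ∑ q, ∑ a, ∑ b, ∑ p, g p q a b := by
  rw [Finset.sum_comm]
  exact Finset.sum_congr rfl fun q _ => stmt16_sum3_comm _

private lemma stmt16_sum_ite_const (P : Prop) [Decidable P] (h : Fin n → M) :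
    ∑ i, (if P then h i else 0) = if P then ∑ i, h i else 0 := by
  split <;> simp

end stmt16helpers

section stmt16scal

private lemma stmt16_half_cancel (K : Type*) [Field K] [CharZero K] {A : Type*} [Ring A]
    [Algebra K A] {X : A} (h : X + X = 0) : X = 0 := by
  have h2 : (2:K) • X = 0 := by rw [two_smul]; exact h
  calc X = ((1/2:K) * 2) • X := by norm_num
  _ = (1/2:K) • ((2:K) • X) := by rw [smul_smul]
  _ = 0 := by rw [h2, smul_zero]

private lemma stmt16_third_cancel (K : Type*) [Field K] [CharZero K] {A : Type*} [Ring A]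
    [Algebra K A] {X : A} (h : X + X + X = 0) : X = 0 := by
  have h3 : (3:K) • X = 0 := by
    rw [show (3:K) = 2 + 1 by norm_num, add_smul, two_smul, one_smul]; exact h
  calc X = ((1/3:K) * 3) • X := by norm_num
  _ = (1/3:K) • ((3:K) • X) := by rw [smul_smul]
  _ = 0 := by rw [h3, smul_zero]

private lemma stmt16_half_eq (K : Type*) [Field K] [CharZero K] {A : Type*} [Ring A]
    [Algebra K A] (X : A) : X = (1/2:K) • (X + X) := by
  rw [← two_smul K, smul_smul]; norm_num

end stmt16scal

section stmt16f
variable {K : Type*} [Field K] [CharZero K] {n : ℕ}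
variable (f : Fin n → Fin n → Fin n → K)
variable (hf1 : ∀ a b c, f a b c = - f b a c) (hf2 : ∀ a b c, f a b c = - f a c b)

include hf1 in
private lemma stmt16_fzero (a c : Fin n) : f a a c = 0 := by
  have h := hf1 a a c; linear_combination (1/2 : K) * h

include hf1 hf2 in
private lemma stmt16_fcyc (a b c : Fin n) : f c a b = f a b c := by
  rw [hf1 c a b, hf2 a c b]; ring

include hf1 hf2 in
private lemma stmt16_frev (a b c : Fin n) : f a b c = - f c b a := by
  rw [hf1 a b c, hf2 b a c, hf1 b c a]; ring

include hf1 hf2 in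
private lemma stmt16_hcyc (hjac : ∀ a b c d, ∑ e, (f a b e * f e c d + f c b e * f a e d
      + f d b e * f a c e) = 0) (d a b q : Fin n) :
    (∑ p, f a b p * f p q d) + (∑ p, f b q p * f p a d) + (∑ p, f q a p * f p b d) = 0 := by
  rw [← Finset.sum_add_distrib, ← Finset.sum_add_distrib, ← hjac a b q d]
  refine Finset.sum_congr rfl fun p _ => ?_
  rw [hf1 b q p, hf1 p a d, hf1 q a p, stmt16_frev f hf1 hf2 p b d]
  ring
end stmt16f

section stmt16cliff
variable {A : Type*} [Ring A] {n : ℕ} (x : Fin n → A)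
variable (hx : ∀ a b, x a * x b + x b * x a = if a = b then 1 else 0)
include hx

private lemma stmt16_xswap (d a : Fin n) :
    x d * x a = (if d = a then 1 else 0) - x a * x d :=
  eq_sub_of_add_eq (hx d a)

private lemma stmt16_keypair (d a b : Fin n) : x d * (x a * x b) =
    (if d = a then x b else 0) - (if d = b then x a else 0) + x a * x b * x d := by
  calc x d * (x a * x b) = (x d * x a) * x b := by rw [mul_assoc]
  _ = ((if d = a then 1 else 0) - x a * x d) * x b := by rw [stmt16_xswap x hx]
  _ = (if d = a then (1:A) else 0) * x b - x a * (x d * x b) := by noncomm_ring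
  _ = (if d = a then (1:A) else 0) * x b
      - x a * ((if d = b then 1 else 0) - x b * x d) := by rw [stmt16_xswap x hx]
  _ = (if d = a then x b else 0) - (if d = b then x a else 0) + x a * x b * x d := by
      simp only [mul_sub, sub_mul, ite_mul, mul_ite, one_mul, mul_one, zero_mul, mul_zero]
      noncomm_ring

private lemma stmt16_keycube (d a b c : Fin n) : x d * (x a * x b * x c) =
    (if d = a then x b * x c else 0) - (if d = b then x a * x c else 0)
      + (if d = c then x a * x b else 0) - x a * x b * x c * x d := by
  calc x d * (x a * x b * x c) = (x d * (x a * x b)) * x c := (mul_assoc _ _ _).symm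
  _ = ((if d = a then x b else 0) - (if d = b then x a else 0) + x a * x b * x d) * x c := by
      rw [stmt16_keypair x hx]
  _ = (if d = a then x b * x c else 0) - (if d = b then x a * x c else 0)
      + (x a * x b) * (x d * x c) := by
      simp only [ite_mul, zero_mul, sub_mul, add_mul]; noncomm_ring
  _ = (if d = a then x b * x c else 0) - (if d = b then x a * x c else 0)
      + (x a * x b) * ((if d = c then 1 else 0) - x c * x d) := by rw [stmt16_xswap x hx d c]
  _ = _ := by
      simp only [mul_sub, mul_ite, mul_one, mul_zero]; noncomm_ring

end stmt16cliff

section stmt16E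
variable {K : Type*} [Field K] [CharZero K]
variable {A : Type*} [Ring A] [Algebra K A] {n : ℕ}
variable (x : Fin n → A) (f : Fin n → Fin n → Fin n → K)

private lemma stmt16_E
    (hf2 : ∀ a b c, f a b c = - f a c b)
    (fcyc : ∀ a b c, f c a b = f a b c)
    (keycube : ∀ d a b c, x d * (x a * x b * x c) =
      (if d = a then x b * x c else 0) - (if d = b then x a * x c else 0)
        + (if d = c then x a * x b else 0) - x a * x b * x c * x d)
    (γ : A)
    (hγ : γ = (-(1/6 : K)) • ∑ a, ∑ b, ∑ c, f a b c • (x a * x b * x c)) (d : Fin n) :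
    γ * x d + x d * γ = (-(1/2:K)) • ∑ a, ∑ b, f a b d • (x a * x b) := by
  classical
  have step1 : γ * x d + x d * γ = (-(1/6:K)) • ∑ a, ∑ b, ∑ c, f a b c •
      ((x a * x b * x c) * x d + x d * (x a * x b * x c)) := by
    rw [hγ, smul_mul_assoc, mul_smul_comm, ← smul_add]
    congr 1
    rw [Finset.sum_mul, Finset.mul_sum, ← Finset.sum_add_distrib]
    refine Finset.sum_congr rfl fun a _ => ?_
    rw [Finset.sum_mul, Finset.mul_sum, ← Finset.sum_add_distrib]
    refine Finset.sum_congr rfl fun b _ => ?_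
    rw [Finset.sum_mul, Finset.mul_sum, ← Finset.sum_add_distrib]
    refine Finset.sum_congr rfl fun c _ => ?_
    rw [smul_mul_assoc, mul_smul_comm, ← smul_add]
  have step2 : ∀ a b c, (x a * x b * x c) * x d + x d * (x a * x b * x c)
      = (if d = a then x b * x c else 0) - (if d = b then x a * x c else 0)
        + (if d = c then x a * x b else 0) := by
    intro a b c; rw [keycube d a b c]; abel
  rw [step1]
  simp only [step2, smul_sub, smul_add, smul_ite, smul_zero,
    Finset.sum_sub_distrib, Finset.sum_add_distrib]
  have hQ3 : (∑ a, ∑ b, ∑ c, if d = c then f a b c • (x a * x b) else 0)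
      = ∑ a, ∑ b, f a b d • (x a * x b) := by
    refine Finset.sum_congr rfl fun a _ => Finset.sum_congr rfl fun b _ => ?_
    simp
  have hQ1 : (∑ a, ∑ b, ∑ c, if d = a then f a b c • (x b * x c) else 0)
      = ∑ a, ∑ b, f a b d • (x a * x b) := by
    calc (∑ a, ∑ b, ∑ c, if d = a then f a b c • (x b * x c) else 0)
        = ∑ a, if d = a then ∑ b, ∑ c, f a b c • (x b * x c) else 0 := by
          refine Finset.sum_congr rfl fun a _ => ?_
          rw [← stmt16_sum_ite_const]
          exact Finset.sum_congr rfl fun b _ => stmt16_sum_ite_const _ _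
    _ = ∑ b, ∑ c, f d b c • (x b * x c) := by rw [Finset.sum_ite_eq]; simp
    _ = ∑ a, ∑ b, f a b d • (x a * x b) := by
          refine Finset.sum_congr rfl fun a _ => Finset.sum_congr rfl fun b _ => ?_
          rw [fcyc a b d]
  have hQ2 : (∑ a, ∑ b, ∑ c, if d = b then f a b c • (x a * x c) else 0)
      = - ∑ a, ∑ b, f a b d • (x a * x b) := by
    calc (∑ a, ∑ b, ∑ c, if d = b then f a b c • (x a * x c) else 0)
        = ∑ a, ∑ b, if d = b then ∑ c, f a b c • (x a * x c) else 0 :=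
          Finset.sum_congr rfl fun a _ => Finset.sum_congr rfl fun b _ =>
            stmt16_sum_ite_const _ _
    _ = ∑ a, ∑ c, f a d c • (x a * x c) := by
          refine Finset.sum_congr rfl fun a _ => ?_
          rw [Finset.sum_ite_eq]; simp
    _ = ∑ a, ∑ b, -(f a b d • (x a * x b)) := by
          refine Finset.sum_congr rfl fun a _ => Finset.sum_congr rfl fun b _ => ?_
          rw [hf2 a d b, neg_smul]
    _ = - ∑ a, ∑ b, f a b d • (x a * x b) := by simp only [Finset.sum_neg_distrib]
  rw [hQ1, hQ2, hQ3]
  module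

end stmt16E

section stmt16F
variable {K : Type*} [Field K] [CharZero K]
variable {A : Type*} [Ring A] [Algebra K A] {n : ℕ}
variable (x : Fin n → A) (f : Fin n → Fin n → Fin n → K)
variable (hx : ∀ a b, x a * x b + x b * x a = if a = b then 1 else 0)
variable (hf1 : ∀ a b c, f a b c = - f b a c) (hf2 : ∀ a b c, f a b c = - f a c b)

include hf1 in
private lemma stmt16_F (keypair : ∀ d a b, x d * (x a * x b) =
      (if d = a then x b else 0) - (if d = b then x a else 0) + x a * x b * x d)
    (hcyc : ∀ d a b q,
      (∑ p, f a b p * f p q d) + (∑ p, f b q p * f p a d) + (∑ p, f q a p * f p b d) = 0)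
    (fzero : ∀ a c, f a a c = 0)
    (d : Fin n) (γ : A)
    (hE : ∀ p, γ * x p + x p * γ = (-(1/2:K)) • ∑ a, ∑ b, f a b p • (x a * x b)) :
    γ * (∑ a, ∑ b, f a b d • (x a * x b)) = (∑ a, ∑ b, f a b d • (x a * x b)) * γ := by
  classical
  set C : Fin n → Fin n → Fin n → K := fun a b q => ∑ p, f a b p * f p q d with hC
  -- C facts
  have hCanti : ∀ a q, C a a q = 0 := by
    intro a q; simp only [hC]
    exact Finset.sum_eq_zero fun p _ => by rw [fzero a p]; ring
  have hCswap : ∀ a b q, C b a q = - C a b q := by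
    intro a b q; simp only [hC, ← Finset.sum_neg_distrib]
    exact Finset.sum_congr rfl fun p _ => by rw [hf1 b a p]; ring
  have hCcyc : ∀ a b q, C a b q = - C b q a - C q a b := by
    intro a b q
    have h := hcyc d a b q
    simp only [hC]
    linear_combination h
  -- abbreviations
  set Q : Fin n → A := fun p => ∑ a, ∑ b, f a b p • (x a * x b) with hQdef
  have hc1 : ∀ p q, γ * (x p * x q) - (x p * x q) * γ
      = ((-(1/2:K)) • Q p) * x q - x p * ((-(1/2:K)) • Q q) := by
    intro p q
    calc γ * (x p * x q) - (x p * x q) * γ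
        = (γ * x p + x p * γ) * x q - x p * (γ * x q + x q * γ) := by noncomm_ring
    _ = _ := by rw [hE p, hE q]
  have step1 : γ * Q d - Q d * γ
      = ∑ p, ∑ q, f p q d • (γ * (x p * x q) - (x p * x q) * γ) := by
    simp only [hQdef]
    rw [Finset.mul_sum, Finset.sum_mul, ← Finset.sum_sub_distrib]
    refine Finset.sum_congr rfl fun p _ => ?_
    rw [Finset.mul_sum, Finset.sum_mul, ← Finset.sum_sub_distrib]
    refine Finset.sum_congr rfl fun q _ => ?_
    rw [mul_smul_comm, smul_mul_assoc, ← smul_sub]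
  have step2 : ∀ p q, f p q d • (γ * (x p * x q) - (x p * x q) * γ)
      = (-(1/2:K)) • ((∑ a, ∑ b, (f p q d * f a b p) • ((x a * x b) * x q))
          - (∑ a, ∑ b, (f p q d * f a b q) • (x p * (x a * x b)))) := by
    intro p q
    rw [hc1 p q]
    simp only [hQdef, smul_mul_assoc, mul_smul_comm, Finset.sum_mul, Finset.mul_sum,
      Finset.smul_sum, smul_sub, smul_smul, ← Finset.sum_sub_distrib]
    refine Finset.sum_congr rfl fun a _ => ?_
    refine Finset.sum_congr rfl fun b _ => ?_
    module
  -- main chain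
  have hCsum : ∀ a b q, C a b q + C b q a + C q a b = 0 := by
    intro a b q
    have h := hcyc d a b q
    simp only [hC]
    linear_combination h
  have step3 : γ * Q d - Q d * γ = (-(1/2:K)) • (
      (∑ p, ∑ q, ∑ a, ∑ b, (f p q d * f a b p) • ((x a * x b) * x q))
    - (∑ p, ∑ q, ∑ a, ∑ b, (f p q d * f a b q) • (x p * (x a * x b)))) := by
    rw [step1]
    simp only [step2]
    simp only [← Finset.smul_sum, Finset.sum_sub_distrib]
  have step4 : (∑ p, ∑ q, ∑ a, ∑ b, (f p q d * f a b q) • (x p * (x a * x b)))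
      = - ∑ p, ∑ q, ∑ a, ∑ b, (f p q d * f a b p) • (x q * (x a * x b)) := by
    calc (∑ p, ∑ q, ∑ a, ∑ b, (f p q d * f a b q) • (x p * (x a * x b)))
        = ∑ p, ∑ q, ∑ a, ∑ b, (f q p d * f a b p) • (x q * (x a * x b)) :=
          Finset.sum_comm
    _ = ∑ p, ∑ q, ∑ a, ∑ b, -((f p q d * f a b p) • (x q * (x a * x b))) := by
        refine Finset.sum_congr rfl fun p _ => Finset.sum_congr rfl fun q _ =>
          Finset.sum_congr rfl fun a _ => Finset.sum_congr rfl fun b _ => ?_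
        rw [hf1 q p d]
        module
    _ = _ := by simp only [Finset.sum_neg_distrib]
  have collapse : ∀ (m : Fin n → Fin n → Fin n → A),
      (∑ p, ∑ q, ∑ a, ∑ b, (f p q d * f a b p) • m a b q)
        = ∑ q, ∑ a, ∑ b, C a b q • m a b q := by
    intro m
    rw [stmt16_sum4_rot]
    refine Finset.sum_congr rfl fun q _ => Finset.sum_congr rfl fun a _ =>
      Finset.sum_congr rfl fun b _ => ?_
    rw [← Finset.sum_smul]
    congr 1
    exact Finset.sum_congr rfl fun p _ => mul_comm _ _
  set Mv : A := ∑ q, ∑ a, ∑ b, C a b q • ((x a * x b) * x q) with hMv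
  set Nv : A := ∑ q, ∑ a, ∑ b, C a b q • (x q * (x a * x b)) with hNv
  set S0 : A := ∑ a, ∑ b, C a b b • x a with hS0
  have step5 : γ * Q d - Q d * γ = (-(1/2:K)) • (Mv + Nv) := by
    rw [step3, step4]
    rw [collapse (fun a b q => (x a * x b) * x q), collapse (fun a b q => x q * (x a * x b))]
    rw [sub_neg_eq_add]
  have keypair' : ∀ q a b, (x a * x b) * x q
      = x q * (x a * x b) - (if q = a then x b else 0) + (if q = b then x a else 0) := by
    intro q a b; rw [keypair q a b]; abel
  set T1 : A := ∑ q, ∑ a, ∑ b, (if q = a then C a b q • x b else 0) with hT1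
  set T2 : A := ∑ q, ∑ a, ∑ b, (if q = b then C a b q • x a else 0) with hT2
  have hM : Mv = Nv - T1 + T2 := by
    rw [hMv, hNv, hT1, hT2]
    simp only [keypair', smul_sub, smul_add, smul_ite, smul_zero,
      Finset.sum_sub_distrib, Finset.sum_add_distrib]
  have hT1v : T1 = - S0 := by
    rw [hT1, hS0]
    calc (∑ q, ∑ a, ∑ b, (if q = a then C a b q • x b else 0))
        = ∑ a, ∑ b, ∑ q, (if q = a then C a b q • x b else 0) := stmt16_sum3_cyc' _
    _ = ∑ a, ∑ b, C a b a • x b := by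
        refine Finset.sum_congr rfl fun a _ => Finset.sum_congr rfl fun b _ => ?_
        simp
    _ = ∑ a, ∑ b, -(C a b b • x a) := by
        rw [Finset.sum_comm]
        refine Finset.sum_congr rfl fun a _ => Finset.sum_congr rfl fun b _ => ?_
        rw [hCswap a b b, neg_smul]
    _ = - ∑ a, ∑ b, C a b b • x a := by simp only [Finset.sum_neg_distrib]
  have hT2v : T2 = S0 := by
    rw [hT2, hS0]
    calc (∑ q, ∑ a, ∑ b, (if q = b then C a b q • x a else 0))
        = ∑ a, ∑ b, ∑ q, (if q = b then C a b q • x a else 0) := stmt16_sum3_cyc' _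
    _ = ∑ a, ∑ b, C a b b • x a := by
        refine Finset.sum_congr rfl fun a _ => Finset.sum_congr rfl fun b _ => ?_
        simp
  set N1 : A := ∑ q, ∑ a, ∑ b, C b q a • (x q * (x a * x b)) with hN1
  set N2 : A := ∑ q, ∑ a, ∑ b, C q a b • (x q * (x a * x b)) with hN2
  have hZ : Nv + N1 + N2 = 0 := by
    rw [hNv, hN1, hN2]
    simp only [← Finset.sum_add_distrib]
    refine Finset.sum_eq_zero fun q _ => Finset.sum_eq_zero fun a _ =>
      Finset.sum_eq_zero fun b _ => ?_
    rw [← add_smul, ← add_smul, hCsum a b q, zero_smul]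
  have hN1v : N1 = S0 + Nv := by
    rw [hN1]
    calc (∑ q, ∑ a, ∑ b, C b q a • (x q * (x a * x b)))
        = ∑ a, ∑ b, ∑ q, C a b q • (x b * (x q * x a)) := stmt16_sum3_cyc _
    _ = ∑ a, ∑ b, ∑ q, C a b q • ((if b = q then x a else 0) - (if b = a then x q else 0)
          + (x q * x a) * x b) := by
        refine Finset.sum_congr rfl fun a _ => Finset.sum_congr rfl fun b _ =>
          Finset.sum_congr rfl fun q _ => ?_
        rw [keypair b q a]
    _ = (∑ a, ∑ b, ∑ q, (if b = q then C a b q • x a else 0))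
        - (∑ a, ∑ b, ∑ q, (if b = a then C a b q • x q else 0))
        + (∑ a, ∑ b, ∑ q, C a b q • ((x q * x a) * x b)) := by
        simp only [smul_sub, smul_add, smul_ite, smul_zero,
          Finset.sum_sub_distrib, Finset.sum_add_distrib]
    _ = S0 - 0 + Nv := by
        congr 1
        · congr 1
          · rw [hS0]
            refine Finset.sum_congr rfl fun a _ => Finset.sum_congr rfl fun b _ => ?_
            simp
          · refine Finset.sum_eq_zero fun a _ => ?_
            have : ∀ b : Fin n, (∑ q, if b = a then C a b q • x q else 0)
                = if b = a then ∑ q, C a b q • x q else 0 := fun b => stmt16_sum_ite_const _ _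
            simp only [this]
            rw [Finset.sum_ite_eq' Finset.univ a (fun b => ∑ q, C a b q • x q)]
            simp only [Finset.mem_univ, if_true]
            exact Finset.sum_eq_zero fun q _ => by rw [hCanti, zero_smul]
        · rw [hNv]
          calc (∑ a, ∑ b, ∑ q, C a b q • ((x q * x a) * x b))
              = ∑ a, ∑ b, ∑ q, C a b q • (x q * (x a * x b)) := by
                simp only [mul_assoc]
          _ = ∑ q, ∑ a, ∑ b, C a b q • (x q * (x a * x b)) := stmt16_sum3_cyc _
    _ = S0 + Nv := by abel
  have hN2v : N2 = Mv := by
    rw [hN2, hMv]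
    calc (∑ q, ∑ a, ∑ b, C q a b • (x q * (x a * x b)))
        = ∑ a, ∑ b, ∑ q, C a b q • (x a * (x b * x q)) := rfl
    _ = ∑ a, ∑ b, ∑ q, C a b q • ((x a * x b) * x q) := by simp only [mul_assoc]
    _ = ∑ q, ∑ a, ∑ b, C a b q • ((x a * x b) * x q) := (stmt16_sum3_cyc' _).symm
  have hMS : Mv = Nv + S0 + S0 := by rw [hM, hT1v, hT2v]; abel
  have h3 := hZ
  rw [hN1v, hN2v, hMS] at h3
  have h4 : Nv + S0 = 0 := by
    refine stmt16_third_cancel K ?_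
    calc (Nv + S0) + (Nv + S0) + (Nv + S0) = Nv + (S0 + Nv) + (Nv + S0 + S0) := by abel
    _ = 0 := h3
  have h5 : Mv + Nv = 0 := by
    rw [hMS]
    calc Nv + S0 + S0 + Nv = (Nv + S0) + (Nv + S0) := by abel
    _ = 0 := by rw [h4]; abel
  have h6 : γ * Q d - Q d * γ = 0 := by rw [step5, h5, smul_zero]
  have h7 : γ * Q d = Q d * γ := sub_eq_zero.mp h6
  exact h7

end stmt16F

section stmt16U
variable {K : Type*} [Field K] [CharZero K]
variable {A : Type*} [Ring A] [Algebra K A] {n : ℕ}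
variable (u x : Fin n → A) (f : Fin n → Fin n → Fin n → K)

private lemma stmt16_cas
    (hu : ∀ a b, u a * u b - u b * u a = ∑ c, f c a b • u c)
    (hf1 : ∀ a b c, f a b c = - f b a c)
    (e : Fin n) :
    (∑ a, u a * u a) * u e = u e * ∑ a, u a * u a := by
  have key : ∀ a, u a * u a * u e - u e * (u a * u a)
      = ∑ c, f c a e • (u c * u a + u a * u c) := by
    intro a
    have h := hu a e
    calc u a * u a * u e - u e * (u a * u a)
        = u a * (u a * u e - u e * u a) + (u a * u e - u e * u a) * u a := by noncomm_ring
    _ = u a * (∑ c, f c a e • u c) + (∑ c, f c a e • u c) * u a := by rw [h]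
    _ = ∑ c, (f c a e • (u a * u c) + f c a e • (u c * u a)) := by
        rw [Finset.mul_sum, Finset.sum_mul, ← Finset.sum_add_distrib]
        exact Finset.sum_congr rfl fun c _ => by rw [mul_smul_comm, smul_mul_assoc]
    _ = ∑ c, f c a e • (u c * u a + u a * u c) :=
        Finset.sum_congr rfl fun c _ => by rw [← smul_add, add_comm]
  have hG : (∑ a, u a * u a) * u e - u e * ∑ a, u a * u a
      = ∑ a, ∑ c, f c a e • (u c * u a + u a * u c) := by
    rw [Finset.sum_mul, Finset.mul_sum, ← Finset.sum_sub_distrib]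
    exact Finset.sum_congr rfl fun a _ => key a
  have hGneg : (∑ a, ∑ c, f c a e • (u c * u a + u a * u c))
      = - ∑ a, ∑ c, f c a e • (u c * u a + u a * u c) := by
    calc (∑ a, ∑ c, f c a e • (u c * u a + u a * u c))
        = ∑ a, ∑ c, f a c e • (u a * u c + u c * u a) := Finset.sum_comm
    _ = ∑ a, ∑ c, -(f c a e • (u c * u a + u a * u c)) := by
        refine Finset.sum_congr rfl fun a _ => Finset.sum_congr rfl fun c _ => ?_
        rw [hf1 a c e]; module
    _ = _ := by simp only [Finset.sum_neg_distrib]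
  have hG0 : (∑ a, ∑ c, f c a e • (u c * u a + u a * u c)) = 0 := by
    refine stmt16_half_cancel K ?_
    nth_rewrite 2 [hGneg]
    abel
  exact sub_eq_zero.mp (hG.trans hG0)

private lemma stmt16_SS
    (hu : ∀ a b, u a * u b - u b * u a = ∑ c, f c a b • u c)
    (hx : ∀ a b, x a * x b + x b * x a = if a = b then 1 else 0)
    (hux : ∀ a b, u a * x b = x b * u a) :
    (∑ a, x a * u a) * (∑ b, x b * u b)
      = (1/2:K) • (∑ a, u a * u a)
        + (1/2:K) • (∑ a, ∑ b, ∑ c, f c a b • ((x a * x b) * u c)) := by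
  classical
  have expand : (∑ a, x a * u a) * (∑ b, x b * u b)
      = ∑ a, ∑ b, (x a * x b) * (u a * u b) := by
    rw [Finset.sum_mul]
    refine Finset.sum_congr rfl fun a _ => ?_
    rw [Finset.mul_sum]
    refine Finset.sum_congr rfl fun b _ => ?_
    calc (x a * u a) * (x b * u b) = x a * ((u a * x b) * u b) := by noncomm_ring
    _ = x a * ((x b * u a) * u b) := by rw [hux a b]
    _ = (x a * x b) * (u a * u b) := by noncomm_ring
  set T : A := ∑ a, ∑ b, (x a * x b) * (u a * u b) with hT
  have doubleT : T + T = (∑ a, u a * u a)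
      + (∑ a, ∑ b, ∑ c, f c a b • ((x a * x b) * u c)) := by
    have hT2 : T = ∑ a, ∑ b, (x b * x a) * (u b * u a) := by
      rw [hT]; exact Finset.sum_comm
    have comb : T + T = ∑ a, ∑ b,
        ((x a * x b) * (u a * u b) + (x b * x a) * (u b * u a)) := by
      nth_rewrite 2 [hT2]
      rw [hT, ← Finset.sum_add_distrib]
      refine Finset.sum_congr rfl fun a _ => ?_
      rw [← Finset.sum_add_distrib]
    rw [comb]
    have per : ∀ a b, (x a * x b) * (u a * u b) + (x b * x a) * (u b * u a)
        = (∑ c, f c a b • ((x a * x b) * u c))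
          + (if a = b then u b * u a else 0) := by
      intro a b
      have h1 : x b * x a = (if a = b then 1 else 0) - x a * x b :=
        eq_sub_of_add_eq (by rw [add_comm]; exact hx a b)
      calc (x a * x b) * (u a * u b) + (x b * x a) * (u b * u a)
          = (x a * x b) * (u a * u b)
            + ((if a = b then 1 else 0) - x a * x b) * (u b * u a) := by rw [h1]
      _ = (x a * x b) * (u a * u b - u b * u a)
            + (if a = b then (1:A) else 0) * (u b * u a) := by noncomm_ring
      _ = (x a * x b) * (∑ c, f c a b • u c)
            + (if a = b then (1:A) else 0) * (u b * u a) := by rw [hu a b]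
      _ = (∑ c, f c a b • ((x a * x b) * u c))
            + (if a = b then u b * u a else 0) := by
          rw [Finset.mul_sum, ite_mul, one_mul, zero_mul]
          exact congrArg₂ (· + ·)
            (Finset.sum_congr rfl fun c _ => mul_smul_comm _ _ _) rfl
    simp only [per]
    simp only [Finset.sum_add_distrib]
    rw [add_comm]
    congr 1
    refine Finset.sum_congr rfl fun a _ => ?_
    simp
  rw [expand, stmt16_half_eq K T, doubleT, smul_add]

private lemma stmt16_cross
    (fcyc : ∀ a b c, f c a b = f a b c)
    (γ : A)
    (hγu : ∀ e, γ * u e = u e * γ)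
    (hE : ∀ p, γ * x p + x p * γ = (-(1/2:K)) • ∑ a, ∑ b, f a b p • (x a * x b)) :
    (∑ a, x a * u a) * γ + γ * (∑ a, x a * u a)
      = (-(1/2:K)) • (∑ a, ∑ b, ∑ c, f c a b • ((x a * x b) * u c)) := by
  classical
  have step1 : (∑ a, x a * u a) * γ + γ * (∑ a, x a * u a)
      = ∑ d, ((γ * x d + x d * γ) * u d) := by
    rw [Finset.sum_mul, Finset.mul_sum, ← Finset.sum_add_distrib]
    refine Finset.sum_congr rfl fun d _ => ?_
    calc (x d * u d) * γ + γ * (x d * u d)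
        = x d * (u d * γ) + (γ * x d) * u d := by noncomm_ring
    _ = x d * (γ * u d) + (γ * x d) * u d := by rw [hγu d]
    _ = (γ * x d + x d * γ) * u d := by noncomm_ring
  rw [step1]
  have step2 : ∀ d, (γ * x d + x d * γ) * u d
      = (-(1/2:K)) • ∑ a, ∑ b, f a b d • ((x a * x b) * u d) := by
    intro d
    rw [hE d, smul_mul_assoc]
    congr 1
    rw [Finset.sum_mul]
    refine Finset.sum_congr rfl fun a _ => ?_
    rw [Finset.sum_mul]
    exact Finset.sum_congr rfl fun b _ => smul_mul_assoc _ _ _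
  simp only [step2]
  rw [← Finset.smul_sum]
  congr 1
  calc (∑ d, ∑ a, ∑ b, f a b d • ((x a * x b) * u d))
      = ∑ d, ∑ a, ∑ b, f d a b • ((x a * x b) * u d) := by
        refine Finset.sum_congr rfl fun d _ => Finset.sum_congr rfl fun a _ =>
          Finset.sum_congr rfl fun b _ => ?_
        rw [fcyc a b d]
  _ = ∑ a, ∑ b, ∑ c, f c a b • ((x a * x b) * u c) :=
      (stmt16_sum3_cyc (fun p q r => f r p q • ((x p * x q) * u r))).symm

end stmt16U

/-- in the quantum Weil algebra `W(g) = U(g) ⊗ Cl(g)` (modeled as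
an algebra generated by even elements `u a` and odd elements `x a` with the
stated relations), the cubic Dirac element `D = ∑ x_a u_a + γ` satisfies
`D² = (1/2) ∑ u_a u_a + γ²`, which is central; consequently the differential
`d = ad(D)` (super-adjoint action, `d z = D z - σ(z) D` with `σ` the parity
automorphism) squares to zero. -/
theorem stmt16 {K : Type*} [Field K] [CharZero K]
    {A : Type*} [Ring A] [Algebra K A] {n : ℕ}
    (u x : Fin n → A) (f : Fin n → Fin n → Fin n → K)
    (hu : ∀ a b, u a * u b - u b * u a = ∑ c, f c a b • u c)
    (hx : ∀ a b, x a * x b + x b * x a = if a = b then 1 else 0)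
    (hux : ∀ a b, u a * x b = x b * u a)
    (hf1 : ∀ a b c, f a b c = - f b a c)
    (hf2 : ∀ a b c, f a b c = - f a c b)
    (hjac : ∀ a b c d, ∑ e, (f a b e * f e c d + f c b e * f a e d
        + f d b e * f a c e) = 0)
    (hgen : Algebra.adjoin K (Set.range u ∪ Set.range x) = ⊤)
    (σ : A →ₐ[K] A) (hσσ : ∀ z, σ (σ z) = z)
    (hσx : ∀ a, σ (x a) = - x a) (hσu : ∀ a, σ (u a) = u a)
    (γ D : A)
    (hγ : γ = (-(1/6 : K)) • ∑ a, ∑ b, ∑ c, f a b c • (x a * x b * x c))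
    (hD : D = (∑ a, x a * u a) + γ) :
    D * D = (1/2 : K) • (∑ a, u a * u a) + γ * γ ∧
    (∀ z : A, (D * D) * z = z * (D * D)) ∧
    (∀ z : A, D * (D * z - σ z * D) - σ (D * z - σ z * D) * D = 0) := by
  classical
  have fc : ∀ a b c, f c a b = f a b c := stmt16_fcyc f hf1 hf2
  have fz : ∀ a c, f a a c = 0 := stmt16_fzero f hf1
  have kp := stmt16_keypair x hx
  have kc := stmt16_keycube x hx
  have hcy := stmt16_hcyc f hf1 hf2 hjac
  have hE : ∀ p, γ * x p + x p * γ = (-(1/2:K)) • ∑ a, ∑ b, f a b p • (x a * x b) :=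
    fun p => stmt16_E x f hf2 fc kc γ hγ p
  have hF : ∀ d, γ * (∑ a, ∑ b, f a b d • (x a * x b))
      = (∑ a, ∑ b, f a b d • (x a * x b)) * γ :=
    fun d => stmt16_F x f hf1 kp hcy fz d γ hE
  have hux3 : ∀ e a b c, u e * (x a * x b * x c) = (x a * x b * x c) * u e := by
    intro e a b c
    calc u e * (x a * x b * x c) = ((u e * x a) * x b) * x c := by noncomm_ring
    _ = ((x a * u e) * x b) * x c := by rw [hux e a]
    _ = (x a * (u e * x b)) * x c := by noncomm_ring
    _ = (x a * (x b * u e)) * x c := by rw [hux e b]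
    _ = (x a * x b) * (u e * x c) := by noncomm_ring
    _ = (x a * x b) * (x c * u e) := by rw [hux e c]
    _ = (x a * x b * x c) * u e := by noncomm_ring
  have hγu : ∀ e, γ * u e = u e * γ := by
    intro e
    rw [hγ, smul_mul_assoc, mul_smul_comm]
    congr 1
    rw [Finset.sum_mul, Finset.mul_sum]
    refine Finset.sum_congr rfl fun a _ => ?_
    rw [Finset.sum_mul, Finset.mul_sum]
    refine Finset.sum_congr rfl fun b _ => ?_
    rw [Finset.sum_mul, Finset.mul_sum]
    refine Finset.sum_congr rfl fun c _ => ?_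
    rw [smul_mul_assoc, mul_smul_comm, hux3 e a b c]
  have hcas := stmt16_cas u f hu hf1
  have hSS := stmt16_SS u x f hu hx hux
  have hcross := stmt16_cross u x f fc γ hγu hE
  have hD2 : D * D = (1/2 : K) • (∑ a, u a * u a) + γ * γ := by
    have expand : D * D = (∑ a, x a * u a) * (∑ b, x b * u b)
        + ((∑ a, x a * u a) * γ + γ * (∑ a, x a * u a)) + γ * γ := by
      rw [hD]; noncomm_ring
    rw [expand, hSS, hcross]
    module
  have hZu : ∀ e, (D * D) * u e = u e * (D * D) := by
    intro e
    rw [hD2]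
    have h1 : (γ * γ) * u e = u e * (γ * γ) := by
      calc (γ * γ) * u e = γ * (γ * u e) := by rw [mul_assoc]
      _ = γ * (u e * γ) := by rw [hγu e]
      _ = (γ * u e) * γ := by rw [mul_assoc]
      _ = (u e * γ) * γ := by rw [hγu e]
      _ = u e * (γ * γ) := by rw [mul_assoc]
    rw [add_mul, mul_add, smul_mul_assoc, mul_smul_comm, hcas e, h1]
  have hZx : ∀ e, (D * D) * x e = x e * (D * D) := by
    intro e
    rw [hD2]
    have hxu2 : ∀ a, (u a * u a) * x e = x e * (u a * u a) := by
      intro a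
      calc (u a * u a) * x e = u a * (u a * x e) := by rw [mul_assoc]
      _ = u a * (x e * u a) := by rw [hux a e]
      _ = (u a * x e) * u a := by rw [← mul_assoc]
      _ = (x e * u a) * u a := by rw [hux a e]
      _ = x e * (u a * u a) := by rw [mul_assoc]
    have hcasx : (∑ a, u a * u a) * x e = x e * ∑ a, u a * u a := by
      rw [Finset.sum_mul, Finset.mul_sum]
      exact Finset.sum_congr rfl fun a _ => hxu2 a
    have hgg : (γ * γ) * x e = x e * (γ * γ) := by
      have key : (γ * γ) * x e - x e * (γ * γ)
          = γ * (γ * x e + x e * γ) - (γ * x e + x e * γ) * γ := by noncomm_ring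
      rw [hE e, mul_smul_comm, smul_mul_assoc, ← smul_sub] at key
      rw [hF e, sub_self, smul_zero] at key
      exact sub_eq_zero.mp key
    rw [add_mul, mul_add, smul_mul_assoc, mul_smul_comm, hcasx, hgg]
  have hcent : ∀ z : A, (D * D) * z = z * (D * D) := by
    intro z
    have hle : (⊤ : Subalgebra K A) ≤ Subalgebra.centralizer K {D * D} := by
      rw [← hgen]
      apply Algebra.adjoin_le
      rintro w (⟨a, rfl⟩ | ⟨a, rfl⟩)
      · exact (Subalgebra.mem_centralizer_iff K).mpr fun g hg => by
          rw [Set.mem_singleton_iff] at hg; rw [hg]; exact hZu a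
      · exact (Subalgebra.mem_centralizer_iff K).mpr fun g hg => by
          rw [Set.mem_singleton_iff] at hg; rw [hg]; exact hZx a
    have hz : z ∈ Subalgebra.centralizer K {D * D} := hle (Algebra.mem_top)
    exact (Subalgebra.mem_centralizer_iff K).mp hz (D * D) rfl
  have hσγ : σ γ = - γ := by
    have hs : σ (∑ a, ∑ b, ∑ c, f a b c • (x a * x b * x c))
        = - ∑ a, ∑ b, ∑ c, f a b c • (x a * x b * x c) := by
      rw [map_sum, ← Finset.sum_neg_distrib]
      refine Finset.sum_congr rfl fun a _ => ?_
      rw [map_sum, ← Finset.sum_neg_distrib]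
      refine Finset.sum_congr rfl fun b _ => ?_
      rw [map_sum, ← Finset.sum_neg_distrib]
      refine Finset.sum_congr rfl fun c _ => ?_
      rw [map_smul, map_mul, map_mul, hσx a, hσx b, hσx c]
      have : (-x a) * (-x b) * (-x c) = -(x a * x b * x c) := by noncomm_ring
      rw [this, smul_neg]
    rw [hγ, map_smul, hs, smul_neg]
  have hσD : σ D = - D := by
    rw [hD, map_add, map_sum, hσγ]
    have hterm : ∀ a, σ (x a * u a) = -(x a * u a) := by
      intro a; rw [map_mul, hσx a, hσu a]; noncomm_ring
    simp only [hterm, Finset.sum_neg_distrib]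
    abel
  refine ⟨hD2, hcent, ?_⟩
  intro z
  have h1 : σ (D * z - σ z * D) = z * D - D * σ z := by
    rw [map_sub, map_mul, map_mul, hσσ, hσD]
    noncomm_ring
  rw [h1]
  calc D * (D * z - σ z * D) - (z * D - D * σ z) * D
      = (D * D) * z - z * (D * D) := by noncomm_ring
  _ = 0 := by rw [hcent z, sub_self]
end

section
/- In the quantum covariant Weil algebra W_τ(g) = U(g) ⊗ Cl(g) ⊗ End(V_τ), the element D_τ = D + Σ_a x_a τ_a (with D = Σ_a x_a u_a + γ) satisfies D_τ² = (1/2)(Σ_a u_a u_a + 2 Σ_a u_a τ_a + Σ_a τ_a τ_a + 2γ²). Equivalently, [D + x_a τ_a, D + x_b τ_b] = u_a u_a + 2 u_a τ_a + τ_a τ_a + 2γ² (sums over repeated indices). -/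
lemma sqsum {K : Type*} [Field K] [CharZero K]
    {A : Type*} [Ring A] [Algebra K A] {n : ℕ}
    (x v : Fin n → A) (f : Fin n → Fin n → Fin n → K)
    (hx : ∀ a b, x a * x b + x b * x a = if a = b then 1 else 0)
    (hv : ∀ a b, v a * v b - v b * v a = ∑ c, f c a b • v c)
    (hvx : ∀ a b, v a * x b = x b * v a) :
    (∑ a, x a * v a) * (∑ b, x b * v b)
      = (1/2:K) • ((∑ a, v a * v a)
        + ∑ a, ∑ b, ∑ c, f c a b • (x a * x b * v c)) := by
  set S := (∑ a, x a * v a) * (∑ b, x b * v b) with hS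
  have key : S + S
      = (∑ a, v a * v a) + ∑ a, ∑ b, ∑ c, f c a b • (x a * x b * v c) := by
    have e1 : S = ∑ a, ∑ b, x a * v a * (x b * v b) := by
      rw [hS, Finset.sum_mul_sum]
    have e2 : S = ∑ a, ∑ b, x b * v b * (x a * v a) := by
      rw [hS, Finset.sum_mul_sum, Finset.sum_comm]
    nth_rewrite 2 [e2]
    nth_rewrite 1 [e1]
    rw [← Finset.sum_add_distrib]
    simp_rw [← Finset.sum_add_distrib]
    have term : ∀ a b, x a * v a * (x b * v b) + x b * v b * (x a * v a)
        = (if a = b then v b * v a else 0) + ∑ c, f c a b • (x a * x b * v c) := by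
      intro a b
      have m1 : x a * v a * (x b * v b) = x a * x b * (v a * v b) := by
        calc x a * v a * (x b * v b) = x a * (v a * x b) * v b := by noncomm_ring
          _ = x a * (x b * v a) * v b := by rw [hvx]
          _ = x a * x b * (v a * v b) := by noncomm_ring
      have m2 : x b * v b * (x a * v a) = x b * x a * (v b * v a) := by
        calc x b * v b * (x a * v a) = x b * (v b * x a) * v a := by noncomm_ring
          _ = x b * (x a * v b) * v a := by rw [hvx]
          _ = x b * x a * (v b * v a) := by noncomm_ring
      rw [m1, m2]
      have e3 : x b * x a = (if a = b then (1:A) else 0) - x a * x b :=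
        eq_sub_of_add_eq' (hx a b)
      have e4 : v b * v a = v a * v b - ∑ c, f c a b • v c := by
        have := hv a b; rw [← this]; abel
      rw [e3, e4]
      have : x a * x b * (∑ c, f c a b • v c) = ∑ c, f c a b • (x a * x b * v c) := by
        rw [Finset.mul_sum]
        exact Finset.sum_congr rfl fun c _ => by rw [mul_smul_comm]
      rw [← this]
      by_cases h : a = b <;> simp [h] <;> noncomm_ring
    simp_rw [term]
    simp_rw [Finset.sum_add_distrib]
    congr 1
    simp [Finset.sum_ite_eq]
  calc S = (1/2:K) • (S + S) := by
        rw [smul_add, ← add_smul]; norm_num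
    _ = _ := by rw [key]

lemma xgam {K : Type*} [Field K] [CharZero K]
    {A : Type*} [Ring A] [Algebra K A] {n : ℕ}
    (x : Fin n → A) (f : Fin n → Fin n → Fin n → K)
    (hx : ∀ a b, x a * x b + x b * x a = if a = b then 1 else 0)
    (hf1 : ∀ a b c, f a b c = - f b a c)
    (hf2 : ∀ a b c, f a b c = - f a c b)
    (d : Fin n) :
    x d * ((-(1/6:K)) • ∑ a, ∑ b, ∑ c, f a b c • (x a * x b * x c))
      + ((-(1/6:K)) • ∑ a, ∑ b, ∑ c, f a b c • (x a * x b * x c)) * x d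
    = (-(1/2:K)) • ∑ r, ∑ s, f d r s • (x r * x s) := by
  have key : ∀ a b c : Fin n, x d * (x a * x b * x c) + x a * x b * x c * x d
      = (if d = a then (1:A) else 0) * (x b * x c)
        - (if d = b then (1:A) else 0) * (x a * x c)
        + (if d = c then (1:A) else 0) * (x a * x b) := by
    intro a b c
    have swap : ∀ (e : Fin n) (y : A),
        x d * (x e * y) = (if d = e then (1:A) else 0) * y - x e * (x d * y) := by
      intro e y
      rw [← mul_assoc, eq_sub_of_add_eq (hx d e), sub_mul, mul_assoc]
    rw [mul_assoc (x a) (x b) (x c), swap a, swap b,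
      eq_sub_of_add_eq (hx d c)]
    split_ifs <;> noncomm_ring
  have expand : x d * ((-(1/6:K)) • ∑ a, ∑ b, ∑ c, f a b c • (x a * x b * x c))
      + ((-(1/6:K)) • ∑ a, ∑ b, ∑ c, f a b c • (x a * x b * x c)) * x d
    = (-(1/6:K)) • ∑ a, ∑ b, ∑ c,
        f a b c • (x d * (x a * x b * x c) + x a * x b * x c * x d) := by
    rw [mul_smul_comm, smul_mul_assoc, ← smul_add]
    congr 1
    rw [Finset.mul_sum, Finset.sum_mul, ← Finset.sum_add_distrib]
    refine Finset.sum_congr rfl fun a _ => ?_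
    rw [Finset.mul_sum, Finset.sum_mul, ← Finset.sum_add_distrib]
    refine Finset.sum_congr rfl fun b _ => ?_
    rw [Finset.mul_sum, Finset.sum_mul, ← Finset.sum_add_distrib]
    refine Finset.sum_congr rfl fun c _ => ?_
    rw [mul_smul_comm, smul_mul_assoc, smul_add]
  rw [expand]
  simp_rw [key]
  simp_rw [smul_add, smul_sub, Finset.sum_add_distrib, Finset.sum_sub_distrib]
  have hS1 : (∑ a, ∑ b, ∑ c, f a b c • ((if d = a then (1:A) else 0) * (x b * x c)))
      = ∑ r, ∑ s, f d r s • (x r * x s) := by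
    simp [ite_mul, smul_ite, Finset.sum_ite_irrel, Finset.sum_ite_eq]
  have hS2 : (∑ a, ∑ b, ∑ c, f a b c • ((if d = b then (1:A) else 0) * (x a * x c)))
      = - ∑ r, ∑ s, f d r s • (x r * x s) := by
    simp only [ite_mul, one_mul, zero_mul, smul_ite, smul_zero,
      Finset.sum_ite_irrel, Finset.sum_const_zero, Finset.sum_ite_eq,
      Finset.mem_univ, if_true]
    rw [← Finset.sum_neg_distrib]
    refine Finset.sum_congr rfl fun a _ => ?_
    rw [← Finset.sum_neg_distrib]
    refine Finset.sum_congr rfl fun c _ => ?_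
    rw [hf1 a d c, neg_smul]
  have hS3 : (∑ a, ∑ b, ∑ c, f a b c • ((if d = c then (1:A) else 0) * (x a * x b)))
      = ∑ r, ∑ s, f d r s • (x r * x s) := by
    simp only [ite_mul, one_mul, zero_mul, smul_ite, smul_zero,
      Finset.sum_ite_irrel, Finset.sum_const_zero, Finset.sum_ite_eq,
      Finset.mem_univ, if_true]
    refine Finset.sum_congr rfl fun a _ => Finset.sum_congr rfl fun b _ => ?_
    rw [hf2 a b d, hf1 a d b, neg_neg]
  rw [hS1, hS2, hS3]
  set W := ∑ r, ∑ s, f d r s • (x r * x s)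
  module


/-- in the quantum covariant Weil algebra
`W_τ(g) = U(g) ⊗ Cl(g) ⊗ End(V_τ)` (modeled as an algebra generated by even
elements `u a`, `t a = τ_a`, and odd elements `x a` with the stated relations),
the element `D_τ = D + ∑ x_a τ_a` with `D = ∑ x_a u_a + γ` satisfies
`D_τ² = (1/2)(∑ u_a u_a + 2 ∑ u_a τ_a + ∑ τ_a τ_a + 2γ²)`. -/
theorem stmt17 {K : Type*} [Field K] [CharZero K]
    {A : Type*} [Ring A] [Algebra K A] {n : ℕ}
    (u x t : Fin n → A) (f : Fin n → Fin n → Fin n → K)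
    (hu : ∀ a b, u a * u b - u b * u a = ∑ c, f c a b • u c)
    (hx : ∀ a b, x a * x b + x b * x a = if a = b then 1 else 0)
    (ht : ∀ a b, t a * t b - t b * t a = ∑ c, f c a b • t c)
    (hux : ∀ a b, u a * x b = x b * u a)
    (hut : ∀ a b, u a * t b = t b * u a)
    (hxt : ∀ a b, x a * t b = t b * x a)
    (hf1 : ∀ a b c, f a b c = - f b a c)
    (hf2 : ∀ a b c, f a b c = - f a c b)
    (hjac : ∀ a b c d, ∑ e, (f a b e * f e c d + f c b e * f a e d
        + f d b e * f a c e) = 0)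
    (γ D Dτ : A)
    (hγ : γ = (-(1/6 : K)) • ∑ a, ∑ b, ∑ c, f a b c • (x a * x b * x c))
    (hD : D = (∑ a, x a * u a) + γ)
    (hDτ : Dτ = D + ∑ a, x a * t a) :
    Dτ * Dτ = (1/2 : K) • ((∑ a, u a * u a) + 2 • (∑ a, u a * t a)
      + (∑ a, t a * t a) + 2 • (γ * γ)) := by
  have hXX := sqsum x u f hx hu hux
  have hYY := sqsum x t f hx ht (fun a b => (hxt b a).symm)
  have hcommU : ∀ a, Commute (u a) γ := by
    intro a
    rw [hγ]
    refine Commute.smul_right ?_ _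
    refine Commute.sum_right _ _ _ fun b _ => ?_
    refine Commute.sum_right _ _ _ fun c _ => ?_
    refine Commute.sum_right _ _ _ fun e _ => ?_
    have h1 : Commute (u a) (x b) := hux a b
    have h2 : Commute (u a) (x c) := hux a c
    have h3 : Commute (u a) (x e) := hux a e
    exact Commute.smul_right ((h1.mul_right h2).mul_right h3) _
  have hcommT : ∀ a, Commute (t a) γ := by
    intro a
    rw [hγ]
    refine Commute.smul_right ?_ _
    refine Commute.sum_right _ _ _ fun b _ => ?_
    refine Commute.sum_right _ _ _ fun c _ => ?_
    refine Commute.sum_right _ _ _ fun e _ => ?_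
    have h1 : Commute (t a) (x b) := (hxt b a).symm
    have h2 : Commute (t a) (x c) := (hxt c a).symm
    have h3 : Commute (t a) (x e) := (hxt e a).symm
    exact Commute.smul_right ((h1.mul_right h2).mul_right h3) _
  have hXY : (∑ a, x a * u a) * (∑ b, x b * t b)
      + (∑ b, x b * t b) * (∑ a, x a * u a) = ∑ a, u a * t a := by
    rw [Finset.sum_mul_sum, Finset.sum_mul_sum]
    nth_rewrite 2 [Finset.sum_comm]
    rw [← Finset.sum_add_distrib]
    simp_rw [← Finset.sum_add_distrib]
    have term : ∀ a b, x a * u a * (x b * t b) + x b * t b * (x a * u a)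
        = if a = b then u a * t b else 0 := by
      intro a b
      have m1 : x a * u a * (x b * t b) = x a * x b * (u a * t b) := by
        calc x a * u a * (x b * t b) = x a * (u a * x b) * t b := by noncomm_ring
          _ = x a * (x b * u a) * t b := by rw [hux]
          _ = x a * x b * (u a * t b) := by noncomm_ring
      have m2 : x b * t b * (x a * u a) = x b * x a * (u a * t b) := by
        calc x b * t b * (x a * u a) = x b * (t b * x a) * u a := by noncomm_ring
          _ = x b * (x a * t b) * u a := by rw [← hxt]
          _ = x b * x a * (t b * u a) := by noncomm_ring
          _ = x b * x a * (u a * t b) := by rw [← hut]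
      rw [m1, m2, ← add_mul, hx a b]
      split_ifs <;> simp
    simp_rw [term]
    simp [Finset.sum_ite_eq]
  have gam : ∀ a, x a * γ + γ * x a
      = (-(1/2:K)) • ∑ r, ∑ s, f a r s • (x r * x s) := by
    intro a
    rw [hγ]
    exact xgam x f hx hf1 hf2 a
  have anti : ∀ (v : Fin n → A), (∀ a, Commute (v a) γ) →
      (∑ a, x a * v a) * γ + γ * (∑ a, x a * v a)
        = (-(1/2:K)) • ∑ a, ∑ r, ∑ s, f a r s • (x r * x s * v a) := by
    intro v hcv
    calc (∑ a, x a * v a) * γ + γ * (∑ a, x a * v a)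
        = ∑ a, (x a * γ + γ * x a) * v a := by
          rw [Finset.sum_mul, Finset.mul_sum, ← Finset.sum_add_distrib]
          refine Finset.sum_congr rfl fun a _ => ?_
          rw [add_mul]
          congr 1
          · calc x a * v a * γ = x a * (v a * γ) := by rw [mul_assoc]
              _ = x a * (γ * v a) := by rw [(hcv a).eq]
              _ = x a * γ * v a := by rw [mul_assoc]
          · rw [mul_assoc]
      _ = ∑ a, ((-(1/2:K)) • ∑ r, ∑ s, f a r s • (x r * x s)) * v a :=
          Finset.sum_congr rfl fun a _ => by rw [gam a]
      _ = (-(1/2:K)) • ∑ a, ∑ r, ∑ s, f a r s • (x r * x s * v a) := by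
          rw [Finset.smul_sum]
          refine Finset.sum_congr rfl fun a _ => ?_
          rw [smul_mul_assoc]
          congr 1
          rw [Finset.sum_mul]
          refine Finset.sum_congr rfl fun r _ => ?_
          rw [Finset.sum_mul]
          refine Finset.sum_congr rfl fun s _ => ?_
          rw [smul_mul_assoc]
  have hXg := anti u hcommU
  have hYg := anti t hcommT
  have reorder : ∀ (v : Fin n → A),
      (∑ a, ∑ b, ∑ c, f c a b • (x a * x b * v c))
        = ∑ c, ∑ a, ∑ b, f c a b • (x a * x b * v c) := by
    intro v
    calc (∑ a, ∑ b, ∑ c, f c a b • (x a * x b * v c))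
        = ∑ a, ∑ c, ∑ b, f c a b • (x a * x b * v c) :=
          Finset.sum_congr rfl fun a _ => Finset.sum_comm
      _ = ∑ c, ∑ a, ∑ b, f c a b • (x a * x b * v c) := Finset.sum_comm
  rw [reorder u] at hXX
  rw [reorder t] at hYY
  rw [hDτ, hD]
  set S1 := ∑ a, x a * u a with hS1
  set S2 := ∑ a, x a * t a with hS2
  have expand : (S1 + γ + S2) * (S1 + γ + S2)
      = S1 * S1 + S2 * S2 + (S1 * S2 + S2 * S1) + (S1 * γ + γ * S1)
        + (S2 * γ + γ * S2) + γ * γ := by noncomm_ring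
  rw [expand, hXX, hYY, hXY, hXg, hYg]
  rw [two_smul, two_smul]
  set Cu := ∑ c, ∑ a, ∑ b, f c a b • (x a * x b * u c)
  set Ct := ∑ c, ∑ a, ∑ b, f c a b • (x a * x b * t c)
  set Pu := ∑ a, u a * u a
  set Pt := ∑ a, t a * t a
  set Put := ∑ a, u a * t a
  module
end
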